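/- arXiv:1808.00879 — 4 statements merged into one kernel-verified Lean document; each statement's English description precedes it below -/
import Mathlib

section
/- Let C1, C2 be homogeneous cubics with integer coefficients, C1 in variables x3,x4,x5 and C2 in variables x0,x1,x2, such that each has no nonzero zeros mod 3 (as plane cubics). Then the cubic form 3·C1 + C2 in six variables has no nontrivial zeros modulo 9: for any (x0,...,x5) in Z^6 with not all coordinates divisible by 3, 3·C1(x3,x4,x5) + C2(x0,x1,x2) is not congruent to 0 mod 9. -/
open MvPolynomial

lemma eval_mul_homog {σ : Type*} (φ : MvPolynomial σ ℤ) {n : ℕ}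
    (h : φ.IsHomogeneous n) (c : ℤ) (v : σ → ℤ) :
    eval (fun i => c * v i) φ = c ^ n * eval v φ := by
  rw [eval_eq, eval_eq, Finset.mul_sum]
  apply Finset.sum_congr rfl
  intro d hd
  rw [MvPolynomial.mem_support_iff] at hd
  have hdeg : (∑ i ∈ d.support, d i) = n := by
    have := h hd
    erw [← Finsupp.degree_eq_weight_one] at this
    simpa [Finsupp.degree_apply] using this
  simp only [mul_pow, Finset.prod_mul_distrib, Finset.prod_pow_eq_pow_sum, hdeg]
  ring

/-- If `C1`, `C2` are homogeneous integer cubics in three variables, each with no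
nonzero zeros mod 3, then the senary cubic form `3·C1(x3,x4,x5) + C2(x0,x1,x2)`
has no nontrivial zeros mod 9 (no zero with some coordinate not divisible by 3). -/
theorem stmt_2 (C1 C2 : MvPolynomial (Fin 3) ℤ)
    (hC1 : C1.IsHomogeneous 3) (hC2 : C2.IsHomogeneous 3)
    (h1 : ∀ v : Fin 3 → ℤ, ¬ (∀ i, (3 : ℤ) ∣ v i) → ¬ (3 : ℤ) ∣ eval v C1)
    (h2 : ∀ v : Fin 3 → ℤ, ¬ (∀ i, (3 : ℤ) ∣ v i) → ¬ (3 : ℤ) ∣ eval v C2) :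
    ∀ x : Fin 6 → ℤ, ¬ (∀ i, (3 : ℤ) ∣ x i) →
      ¬ (9 : ℤ) ∣ (3 * eval (fun i : Fin 3 => x (Fin.natAdd 3 i)) C1
          + eval (fun i : Fin 3 => x (Fin.castAdd 3 i)) C2) := by
  intro x hx hdvd
  set u : Fin 3 → ℤ := fun i => x (Fin.natAdd 3 i) with hu
  set w : Fin 3 → ℤ := fun i => x (Fin.castAdd 3 i) with hw
  -- 3 ∣ eval w C2
  have h3b : (3 : ℤ) ∣ eval w C2 := by
    have : (3 : ℤ) ∣ 3 * eval u C1 + eval w C2 := dvd_trans ⟨3, by norm_num⟩ hdvd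
    omega
  have hwall : ∀ i, (3 : ℤ) ∣ w i := by
    by_contra hcon
    exact h2 w hcon h3b
  -- write w = 3 * w'
  have h27 : (27 : ℤ) ∣ eval w C2 := by
    choose w' hw' using hwall
    have : eval w C2 = 3 ^ 3 * eval w' C2 := by
      rw [← eval_mul_homog C2 hC2 3 w']
      have hwe : w = fun i => 3 * w' i := funext hw'
      rw [hwe]
    rw [this]
    exact ⟨eval w' C2, by ring⟩
  have h3a : (3 : ℤ) ∣ eval u C1 := by
    obtain ⟨k, hk⟩ := hdvd
    obtain ⟨m, hm⟩ := h27
    have : 3 * eval u C1 = 9 * k - 27 * m := by omega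
    omega
  have hual : ∀ i, (3 : ℤ) ∣ u i := by
    by_contra hcon
    exact h1 u hcon h3a
  apply hx
  intro i
  rcases lt_or_ge (i : ℕ) 3 with hI | hI
  · have := hwall ⟨i, hI⟩
    simpa [hw, Fin.castAdd, Fin.castLE, Fin.ext_iff] using this
  · have h3 : (i : ℕ) - 3 < 3 := by omega
    have heq : Fin.natAdd 3 (⟨(i : ℕ) - 3, h3⟩ : Fin 3) = i := by
      simp [Fin.ext_iff]; omega
    have hthis : (3 : ℤ) ∣ x (Fin.natAdd 3 ⟨(i : ℕ) - 3, h3⟩) := hual ⟨(i : ℕ) - 3, h3⟩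
    rwa [heq] at hthis
end

section
/- The specific cubic form C in six variables given by C = 9[(x0+x1+x2+x5)Q1 + (x1+x3)Q2 + (x0+x1+x4+x5)Q3] + 3C1 + C2 (with Q1 = -x0x3 + x2x3 - x0x4 + x1x4 + 3x2x4 + 5x0x5 - x1x5, Q2 = -x1x3 + 5x0x4 - 2x2x4 - 2x0x5 + 5x1x5 + x2x5, Q3 = -2x2x3 - x0x4 - 2x1x4 - 2x2x4 + x1x5, and C1, C2 as above) has no nontrivial zeros modulo 9. -/
lemma lemA5 : ∀ a b c : ZMod 3,
    2*a^3 - a^2*b - 2*a*b^2 - b^3 + 47*a^2*c + 10*a*b*c + b^2*c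
      - 11*a*c^2 - 18*b*c^2 - 4*c^3 = 0 → a = 0 ∧ b = 0 ∧ c = 0 := by decide

lemma lemB5 : ∀ a b c : ZMod 3,
    2*a^3 + 5*a^2*b + a*b^2 + 14*b^3 - 20*a^2*c - 26*a*b*c - 11*b^2*c
      + 47*a*c^2 + 30*b*c^2 + 5*c^3 = 0 → a = 0 ∧ b = 0 ∧ c = 0 := by decide

/-- The explicit cubic form `C = 9[(x0+x1+x2+x5)Q1 + (x1+x3)Q2 + (x0+x1+x4+x5)Q3]
+ 3C1 + C2` has no nontrivial zeros modulo 9: for all integers x0,…,x5 not all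
divisible by 3, C(x0,…,x5) ≢ 0 (mod 9). -/
theorem stmt_5 :
    ∀ x0 x1 x2 x3 x4 x5 : ℤ,
      ¬ ((3 : ℤ) ∣ x0 ∧ (3 : ℤ) ∣ x1 ∧ (3 : ℤ) ∣ x2 ∧ (3 : ℤ) ∣ x3 ∧
          (3 : ℤ) ∣ x4 ∧ (3 : ℤ) ∣ x5) →
      ¬ (9 : ℤ) ∣
        (9 * ((x0 + x1 + x2 + x5) *
                (-x0*x3 + x2*x3 - x0*x4 + x1*x4 + 3*x2*x4 + 5*x0*x5 - x1*x5)
            + (x1 + x3) *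
                (-x1*x3 + 5*x0*x4 - 2*x2*x4 - 2*x0*x5 + 5*x1*x5 + x2*x5)
            + (x0 + x1 + x4 + x5) *
                (-2*x2*x3 - x0*x4 - 2*x1*x4 - 2*x2*x4 + x1*x5))
          + 3 * (2*x3^3 + 5*x3^2*x4 + x3*x4^2 + 14*x4^3 - 20*x3^2*x5
              - 26*x3*x4*x5 - 11*x4^2*x5 + 47*x3*x5^2 + 30*x4*x5^2 + 5*x5^3)
          + (2*x0^3 - x0^2*x1 - 2*x0*x1^2 - x1^3 + 47*x0^2*x2 + 10*x0*x1*x2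
              + x1^2*x2 - 11*x0*x2^2 - 18*x1*x2^2 - 4*x2^3)) := by
  intro x0 x1 x2 x3 x4 x5 h hdvd
  obtain ⟨k, hk⟩ := hdvd
  -- Step 1: mod 3, C ≡ C2, so C2 ≡ 0 mod 3
  have h3 : (3 : ℤ) ∣ (2*x0^3 - x0^2*x1 - 2*x0*x1^2 - x1^3 + 47*x0^2*x2 + 10*x0*x1*x2
      + x1^2*x2 - 11*x0*x2^2 - 18*x1*x2^2 - 4*x2^3) := by
    refine ⟨3*k - 3*((x0 + x1 + x2 + x5) *
                (-x0*x3 + x2*x3 - x0*x4 + x1*x4 + 3*x2*x4 + 5*x0*x5 - x1*x5)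
            + (x1 + x3) *
                (-x1*x3 + 5*x0*x4 - 2*x2*x4 - 2*x0*x5 + 5*x1*x5 + x2*x5)
            + (x0 + x1 + x4 + x5) *
                (-2*x2*x3 - x0*x4 - 2*x1*x4 - 2*x2*x4 + x1*x5))
        - (2*x3^3 + 5*x3^2*x4 + x3*x4^2 + 14*x4^3 - 20*x3^2*x5
              - 26*x3*x4*x5 - 11*x4^2*x5 + 47*x3*x5^2 + 30*x4*x5^2 + 5*x5^3), ?_⟩
    linear_combination hk
  have hc : ((2*x0^3 - x0^2*x1 - 2*x0*x1^2 - x1^3 + 47*x0^2*x2 + 10*x0*x1*x2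
      + x1^2*x2 - 11*x0*x2^2 - 18*x1*x2^2 - 4*x2^3 : ℤ) : ZMod 3) = 0 :=
    (ZMod.intCast_zmod_eq_zero_iff_dvd _ 3).mpr h3
  push_cast at hc
  obtain ⟨ha, hb, hcc⟩ := lemA5 (x0 : ZMod 3) (x1 : ZMod 3) (x2 : ZMod 3)
    (by linear_combination hc)
  obtain ⟨y0, rfl⟩ : (3 : ℤ) ∣ x0 := (ZMod.intCast_zmod_eq_zero_iff_dvd _ 3).mp ha
  obtain ⟨y1, rfl⟩ : (3 : ℤ) ∣ x1 := (ZMod.intCast_zmod_eq_zero_iff_dvd _ 3).mp hb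
  obtain ⟨y2, rfl⟩ : (3 : ℤ) ∣ x2 := (ZMod.intCast_zmod_eq_zero_iff_dvd _ 3).mp hcc
  -- Step 2: now C2 is divisible by 27, so 9 ∣ C forces 3 ∣ C1
  have h31 : (3 : ℤ) ∣ (2*x3^3 + 5*x3^2*x4 + x3*x4^2 + 14*x4^3 - 20*x3^2*x5
      - 26*x3*x4*x5 - 11*x4^2*x5 + 47*x3*x5^2 + 30*x4*x5^2 + 5*x5^3) := by
    have h9 : (9 : ℤ) ∣ 3 * (2*x3^3 + 5*x3^2*x4 + x3*x4^2 + 14*x4^3 - 20*x3^2*x5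
        - 26*x3*x4*x5 - 11*x4^2*x5 + 47*x3*x5^2 + 30*x4*x5^2 + 5*x5^3) := by
      refine ⟨k - ((3*y0 + 3*y1 + 3*y2 + x5) *
                (-(3*y0)*x3 + (3*y2)*x3 - (3*y0)*x4 + (3*y1)*x4 + 3*(3*y2)*x4
                  + 5*(3*y0)*x5 - (3*y1)*x5)
            + (3*y1 + x3) *
                (-(3*y1)*x3 + 5*(3*y0)*x4 - 2*(3*y2)*x4 - 2*(3*y0)*x5
                  + 5*(3*y1)*x5 + (3*y2)*x5)
            + (3*y0 + 3*y1 + x4 + x5) *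
                (-2*(3*y2)*x3 - (3*y0)*x4 - 2*(3*y1)*x4 - 2*(3*y2)*x4 + (3*y1)*x5))
        - 3*(2*y0^3 - y0^2*y1 - 2*y0*y1^2 - y1^3 + 47*y0^2*y2 + 10*y0*y1*y2
              + y1^2*y2 - 11*y0*y2^2 - 18*y1*y2^2 - 4*y2^3), ?_⟩
      linear_combination hk
    obtain ⟨m, hm⟩ := h9
    exact ⟨m, by linarith⟩
  have hc1 : ((2*x3^3 + 5*x3^2*x4 + x3*x4^2 + 14*x4^3 - 20*x3^2*x5
      - 26*x3*x4*x5 - 11*x4^2*x5 + 47*x3*x5^2 + 30*x4*x5^2 + 5*x5^3 : ℤ) : ZMod 3) = 0 :=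
    (ZMod.intCast_zmod_eq_zero_iff_dvd _ 3).mpr h31
  push_cast at hc1
  obtain ⟨hd, he, hf⟩ := lemB5 (x3 : ZMod 3) (x4 : ZMod 3) (x5 : ZMod 3)
    (by linear_combination hc1)
  exact h ⟨⟨y0, rfl⟩, ⟨y1, rfl⟩, ⟨y2, rfl⟩,
    (ZMod.intCast_zmod_eq_zero_iff_dvd _ 3).mp hd,
    (ZMod.intCast_zmod_eq_zero_iff_dvd _ 3).mp he,
    (ZMod.intCast_zmod_eq_zero_iff_dvd _ 3).mp hf⟩
end

section
/- A degree 12 root-of-unity count: the polynomial F_13(t) = (1/13)(t-1)^2 (13t^20 + 8t^19 - 6t^17 - 3t^16 + 3t^15 + 3t^14 + 8t^13 - 2t^11 - 3t^10 - 2t^9 + 8t^7 + 3t^6 + 3t^5 - 3t^4 - 6t^3 + 8t + 13) has exactly 2 roots (counted with multiplicity) that are roots of unity, namely t = 1 with multiplicity 2. -/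
set_option maxRecDepth 100000
set_option maxHeartbeats 2000000

open Polynomial
open scoped Classical

private lemma cert26 (z : ℂ) (h1 : 13*z^20 + 8*z^19 - 6*z^17 - 3*z^16 + 3*z^15 + 3*z^14 + 8*z^13 - 2*z^11 - 3*z^10 - 2*z^9 + 8*z^7 + 3*z^6 + 3*z^5 - 3*z^4 - 6*z^3 + 8*z + 13 = 0) (h2 : z ^ 26 = 1) : False := by
  have key : ((3977816617468) + (-2893330928762)*z + (7321281251338)*z^2 + (-11422545348662)*z^3 + (7321281251338)*z^4 + (-2893330928762)*z^5 + (3977816617468)*z^6 + (3847068932743)*z^7 + (4925006427223)*z^8 + (-7787353456277)*z^9 + (2951021681623)*z^10 + (-6903625758317)*z^11 + (-5635211865632)*z^12 + (-1631096145692)*z^13 + (3679408471393)*z^14 + (-3809520745577)*z^15 + (17602264637983)*z^16 + (-3809520745577)*z^17 + (3679408471393)*z^18 + (-1631096145692)*z^19 + (-5635211865632)*z^20 + (-6903625758317)*z^21 + (2951021681623)*z^22 + (-7787353456277)*z^23 + (4925006427223)*z^24 + (3847068932743)*z^25) * (13*z^20 + 8*z^19 - 6*z^17 - 3*z^16 +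 3*z^15 + 3*z^14 + 8*z^13 - 2*z^11 - 3*z^10 - 2*z^9 + 8*z^7 + 3*z^6 + 3*z^5 - 3*z^4 - 6*z^3 + 8*z + 13) + ((-50107555330151) + (-5790769134162)*z + (72030008837298)*z^2 + (-113789739226710)*z^3 + (9222829198266)*z^4 + (-2357296932540)*z^5 + (78389854001064)*z^6 + (117280761510833)*z^7 + (54747337112333)*z^8 + (-38711625948543)*z^9 + (-143194709054427)*z^10 + (-59324702641208)*z^11 + (-89541740842388)*z^12 + (34313788460061)*z^13 + (84996452065530)*z^14 + (107230206766704)*z^15 + (47017959385575)*z^16 + (61835543513817)*z^17 + (-94801635015843)*z^18 + (-50011896125659)*z^19) * (z ^ 26 - 1) = (101819171357235 : ℂ) := by ring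
  rw [h1, h2] at key
  norm_num at key

private lemma cert28 (z : ℂ) (h1 : 13*z^20 + 8*z^19 - 6*z^17 - 3*z^16 + 3*z^15 + 3*z^14 + 8*z^13 - 2*z^11 - 3*z^10 - 2*z^9 + 8*z^7 + 3*z^6 + 3*z^5 - 3*z^4 - 6*z^3 + 8*z + 13 = 0) (h2 : z ^ 28 = 1) : False := by
  have key : ((895091488916843) + (-960349698167767)*z + (529258199799233)*z^2 + (134922655848098)*z^3 + (-650181842002762)*z^4 + (134922655848098)*z^5 + (529258199799233)*z^6 + (-960349698167767)*z^7 + (895091488916843)*z^8 + (-220292370579337)*z^9 + (535291229480618)*z^10 + (-401461103438872)*z^11 + (497694286628183)*z^12 + (-342738244803427)*z^13 + (530152754250593)*z^14 + (-878125018886917)*z^15 + (467576864335928)*z^16 + (34137253143083)*z^17 + (-752688703151107)*z^18 + (34137253143083)*z^19 + (467576864335928)*z^20 + (-878125018886917)*z^21 + (530152754250593)*z^22 + (-342738244803427)*z^23 + (497694286628183)*z^24 + (-401461103438872)*z^25 + (535291229480618)*z^26 + (-220292370579337)*z^27) * (13*z^20 + 8*z^19 - 6*z^17 - 3*z^16 +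 3*z^15 + 3*z^14 + 8*z^13 - 2*z^11 - 3*z^10 - 2*z^9 + 8*z^7 + 3*z^6 + 3*z^5 - 3*z^4 - 6*z^3 + 8*z + 13) + ((861117200479754) + (-5323814164846227)*z + (-802440987952107)*z^2 + (617511190918080)*z^3 + (-4296158976995049)*z^4 + (-1056685847538390)*z^5 + (5366652681935754)*z^6 + (1113300022914313)*z^7 + (-595853656903622)*z^8 + (1614718989559857)*z^9 + (8139799226128038)*z^10 + (-6602726799867103)*z^11 + (1744002892301717)*z^12 + (8011189044273816)*z^13 + (-4292095667283660)*z^14 + (3024913154564784)*z^15 + (-4580091122131425)*z^16 + (936664508860392)*z^17 + (-5196447018613338)*z^18 + (2863800817531381)*z^19) * (z ^ 28 - 1) = (10775072155439205 : ℂ) := by ring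
  rw [h1, h2] at key
  norm_num at key

private lemma cert32 (z : ℂ) (h1 : 13*z^20 + 8*z^19 - 6*z^17 - 3*z^16 + 3*z^15 + 3*z^14 + 8*z^13 - 2*z^11 - 3*z^10 - 2*z^9 + 8*z^7 + 3*z^6 + 3*z^5 - 3*z^4 - 6*z^3 + 8*z + 13 = 0) (h2 : z ^ 32 = 1) : False := by
  have key : ((-215392123993382) + (-11008895934990347)*z + (8658334570092418)*z^2 + (4097861630549398)*z^3 + (13148186090397148)*z^4 + (-5551638420639302)*z^5 + (-3527866391462792)*z^6 + (-5551638420639302)*z^7 + (13148186090397148)*z^8 + (4097861630549398)*z^9 + (8658334570092418)*z^10 + (-11008895934990347)*z^11 + (-215392123993382)*z^12 + (1285049160883378)*z^13 + (14504813383225843)*z^14 + (-7103039762715902)*z^15 + (1674011639759473)*z^16 + (-12076020123726302)*z^17 + (-2103293180225852)*z^18 + (5424296146119793)*z^19 + (7337952377577388)*z^20 + (-12715958961164177)*z^21 + (-3762089657592407)*z^22 + (-12715958961164177)*z^23 + (7337952377577388)*z^24 + (5424296146119793)*z^25 + (-2103293180225852)*z^26 + (-12076020123726302)*z^27 + (1674011639759473)*z^28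 + (-7103039762715902)*z^29 + (14504813383225843)*z^30 + (1285049160883378)*z^31) * (13*z^20 + 8*z^19 - 6*z^17 - 3*z^16 + 3*z^15 + 3*z^14 + 8*z^13 - 2*z^11 - 3*z^10 - 2*z^9 + 8*z^7 + 3*z^6 + 3*z^5 - 3*z^4 - 6*z^3 + 8*z + 13) + ((-156816059607891761) + (-144838784146821567)*z + (24487181931278658)*z^2 + (123831230501841810)*z^3 + (270408864201480336)*z^4 + (13444693267302645)*z^5 + (-174510408124655541)*z^6 + (-200351753120685187)*z^7 + (70576005184695548)*z^8 + (317715407502579762)*z^9 + (267471176449450368)*z^10 + (-41995394674956278)*z^11 + (-238707550049140628)*z^12 + (-112324141539669024)*z^13 + (120992026423478475)*z^14 + (234480196272371334)*z^15 + (42772461750154335)*z^16 + (-23698990150500018)*z^17 + (-198842967269002983)*z^18 + (-16705639091483914)*z^19) * (z ^ 32 - 1) = (154015961995977795 : ℂ) := by ring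
  rw [h1, h2] at key
  norm_num at key

private lemma cert34 (z : ℂ) (h1 : 13*z^20 + 8*z^19 - 6*z^17 - 3*z^16 + 3*z^15 + 3*z^14 + 8*z^13 - 2*z^11 - 3*z^10 - 2*z^9 + 8*z^7 + 3*z^6 + 3*z^5 - 3*z^4 - 6*z^3 + 8*z + 13 = 0) (h2 : z ^ 34 = 1) : False := by
  have key : ((-34169855123870828) + (-1066890202815651128)*z + (-794379587888067083)*z^2 + (-1026167684769635273)*z^3 + (-1401635938552684163)*z^4 + (-1666843440302592683)*z^5 + (-1407683831141369033)*z^6 + (-2046389056831215368)*z^7 + (-1407683831141369033)*z^8 + (-1666843440302592683)*z^9 + (-1401635938552684163)*z^10 + (-1026167684769635273)*z^11 + (-794379587888067083)*z^12 + (-1066890202815651128)*z^13 + (-34169855123870828)*z^14 + (-444196481508671408)*z^15 + (151314069527314597)*z^16 + (474890444881255702)*z^17 + (692076131472823102)*z^18 + (903674941703513542)*z^19 + (1589637384207920827)*z^20 + (1152265670776522432)*z^21 + (1645768201556695627)*z^22 + (1532168331845472937)*z^23 + (1552577562602842267)*z^24 + (1532168331845472937)*z^25 + (1645768201556695627)*z^26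 + (1152265670776522432)*z^27 + (1589637384207920827)*z^28 + (903674941703513542)*z^29 + (692076131472823102)*z^30 + (474890444881255702)*z^31 + (151314069527314597)*z^32 + (-444196481508671408)*z^33) * (13*z^20 + 8*z^19 - 6*z^17 - 3*z^16 + 3*z^15 + 3*z^14 + 8*z^13 - 2*z^11 - 3*z^10 - 2*z^9 + 8*z^7 + 3*z^6 + 3*z^5 - 3*z^4 - 6*z^3 + 8*z + 13) + ((-5207224724541476249) + (-14142931477594431288)*z + (-18862056265070081103)*z^2 + (-19490197474366570245)*z^3 + (-19926757897076457051)*z^4 + (-25017613661951434785)*z^5 + (-26397672628795091874)*z^6 + (-32233377915413862508)*z^7 + (-34461797242512227878)*z^8 + (-33053909928132418212)*z^9 + (-30233118532914234258)*z^10 + (-25546897081367400797)*z^11 + (-21439875632966011682)*z^12 + (-21240777434333382081)*z^13 + (-23258811205935586860)*z^14 + (-17709088321290387504)*z^15 + (-15461292157248774390)*z^16 + (-7384088339674840902)*z^17 + (1586488948214281503)*z^18 + (5774554259612728304)*z^19) * (z ^ 34 - 1) = (4763016607931155485 : ℂ) := by ring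
  rw [h1, h2] at key
  norm_num at key

private lemma cert36 (z : ℂ) (h1 : 13*z^20 + 8*z^19 - 6*z^17 - 3*z^16 + 3*z^15 + 3*z^14 + 8*z^13 - 2*z^11 - 3*z^10 - 2*z^9 + 8*z^7 + 3*z^6 + 3*z^5 - 3*z^4 - 6*z^3 + 8*z + 13 = 0) (h2 : z ^ 36 = 1) : False := by
  have key : ((635463233846650564783) + (-655885758221722910477)*z + (393632730963148994818)*z^2 + (-197786181305139302477)*z^3 + (-215413479998693153057)*z^4 + (-22477385007408340622)*z^5 + (36114132588181760743)*z^6 + (-555302484196224294197)*z^7 + (429530404587638156098)*z^8 + (-555302484196224294197)*z^9 + (36114132588181760743)*z^10 + (-22477385007408340622)*z^11 + (-215413479998693153057)*z^12 + (-197786181305139302477)*z^13 + (393632730963148994818)*z^14 + (-655885758221722910477)*z^15 + (635463233846650564783)*z^16 + (-116602953582816933662)*z^17 + (-66806463486044790137)*z^18 + (108157965466255242523)*z^19 + (93688890511923776338)*z^20 + (-221163238299806783957)*z^21 + (467680777625752653463)*z^22 + (-360886763467058480462)*z^23 + (369066119195558914063)*z^24 + (138959792982623943763)*z^25 + (80772361057572653698)*z^26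 + (138959792982623943763)*z^27 + (369066119195558914063)*z^28 + (-360886763467058480462)*z^29 + (467680777625752653463)*z^30 + (-221163238299806783957)*z^31 + (93688890511923776338)*z^32 + (108157965466255242523)*z^33 + (-66806463486044790137)*z^34 + (-116602953582816933662)*z^35) * (13*z^20 + 8*z^19 - 6*z^17 - 3*z^16 + 3*z^15 + 3*z^14 + 8*z^13 - 2*z^11 - 3*z^10 - 2*z^9 + 8*z^7 + 3*z^6 + 3*z^5 - 3*z^4 - 6*z^3 + 8*z + 13) + ((557893380605693371219) + (-3442808986109193317937)*z + (-129860563252846351182)*z^2 + (-3234937912341522362355)*z^3 + (-2353739842633739641044)*z^4 + (-503263254659627195670)*z^5 + (234215965403267958009)*z^6 + (-747233020940402141557)*z^7 + (-2736966280689723028192)*z^8 + (-3293405302256282655993)*z^9 + (-3640043873066555755212)*z^10 + (-2687500171529665748003)*z^11 + (-2147909077346963301713)*z^12 + (2386917194742632575296)*z^13 + (-3512206939648482337650)*z^14 + (1374963332137378438929)*z^15 + (-2782837021881952634550)*z^16 + (-871601843172959831703)*z^17 + (1801307653981117741077)*z^18 + (1515838396576620137606)*z^19) * (z ^ 36 -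 1) = (7703128659400763970960 : ℂ) := by ring
  rw [h1, h2] at key
  norm_num at key

private lemma cert38 (z : ℂ) (h1 : 13*z^20 + 8*z^19 - 6*z^17 - 3*z^16 + 3*z^15 + 3*z^14 + 8*z^13 - 2*z^11 - 3*z^10 - 2*z^9 + 8*z^7 + 3*z^6 + 3*z^5 - 3*z^4 - 6*z^3 + 8*z + 13 = 0) (h2 : z ^ 38 = 1) : False := by
  have key : ((193020674134284951956) + (-71921671294371564124)*z + (85025390584763655116)*z^2 + (-146474301053003141584)*z^3 + (453931690693939512371)*z^4 + (-511295593896632262934)*z^5 + (96764137745180556536)*z^6 + (-82845351170229872449)*z^7 + (19893012836184126296)*z^8 + (-271974371228075908324)*z^9 + (19893012836184126296)*z^10 + (-82845351170229872449)*z^11 + (96764137745180556536)*z^12 + (-511295593896632262934)*z^13 + (453931690693939512371)*z^14 + (-146474301053003141584)*z^15 + (85025390584763655116)*z^16 + (-71921671294371564124)*z^17 + (193020674134284951956)*z^18 + (-187971759711370686169)*z^19 + (330827957525421446336)*z^20 + (-301770128735953702084)*z^21 + (134886264090885909791)*z^22 + (-148628597779542762694)*z^23 + (11403106141707198791)*z^24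 + (236111393627238966236)*z^25 + (56934699709414458356)*z^26 + (-325983182764932072469)*z^27 + (740592196988727842171)*z^28 + (-325983182764932072469)*z^29 + (56934699709414458356)*z^30 + (236111393627238966236)*z^31 + (11403106141707198791)*z^32 + (-148628597779542762694)*z^33 + (134886264090885909791)*z^34 + (-301770128735953702084)*z^35 + (330827957525421446336)*z^36 + (-187971759711370686169)*z^37) * (13*z^20 + 8*z^19 - 6*z^17 - 3*z^16 + 3*z^15 + 3*z^14 + 8*z^13 - 2*z^11 - 3*z^10 - 2*z^9 + 8*z^7 + 3*z^6 + 3*z^5 - 3*z^4 - 6*z^3 + 8*z + 13) + ((-4350230056952257202707) + (609183666247449282036)*z + (529956707246955003516)*z^2 + (-2382086833816641311400)*z^3 + (4581785575960563057027)*z^4 + (-2730714502327315701630)*z^5 + (-1845364317402242820852)*z^6 + (-1003567153310715650399)*z^7 + (542104747046838730351)*z^8 + (-1206686822724351898881)*z^9 + (-3489510907014591171639)*z^10 + (1258864555512247986104)*z^11 + (-1699554448322336278711)*z^12 + (-3685234361392462079403)*z^13 + (786566781688802702280)*z^14 + (2274134124425385256203)*z^15 + (-467190961562111327625)*z^16 +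 (1276388013364026556404)*z^17 + (-2796989370139513313016)*z^18 + (2443632876247818920197)*z^19) * (z ^ 38 - 1) = (6859498820697961578135 : ℂ) := by ring
  rw [h1, h2] at key
  norm_num at key

private lemma cert40 (z : ℂ) (h1 : 13*z^20 + 8*z^19 - 6*z^17 - 3*z^16 + 3*z^15 + 3*z^14 + 8*z^13 - 2*z^11 - 3*z^10 - 2*z^9 + 8*z^7 + 3*z^6 + 3*z^5 - 3*z^4 - 6*z^3 + 8*z + 13 = 0) (h2 : z ^ 40 = 1) : False := by
  have key : ((1032479774538909774056) + (169993678869709540316)*z + (1529747218036545415046)*z^2 + (2409103025538405400871)*z^3 + (1449637529942552790266)*z^4 + (1030668696820616822981)*z^5 + (1433426817231685805516)*z^6 + (-1247617851316618904929)*z^7 + (-858815478155332106479)*z^8 + (-1215114767736289582384)*z^9 + (-2786513983998701053294)*z^10 + (-1215114767736289582384)*z^11 + (-858815478155332106479)*z^12 + (-1247617851316618904929)*z^13 + (1433426817231685805516)*z^14 + (1030668696820616822981)*z^15 + (1449637529942552790266)*z^16 + (2409103025538405400871)*z^17 + (1529747218036545415046)*z^18 + (169993678869709540316)*z^19 + (1032479774538909774056)*z^20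 + (-1387949971470821833384)*z^21 + (-1788131283872504604004)*z^22 + (-1118553961821135454729)*z^23 + (-2478036936311585761609)*z^24 + (-1295733856544418338794)*z^25 + (86459046193061097191)*z^26 + (-529542968835792449179)*z^27 + (1601117555305707553121)*z^28 + (1904256992323068004466)*z^29 + (1448135737815654425231)*z^30 + (1904256992323068004466)*z^31 + (1601117555305707553121)*z^32 + (-529542968835792449179)*z^33 + (86459046193061097191)*z^34 + (-1295733856544418338794)*z^35 + (-2478036936311585761609)*z^36 + (-1118553961821135454729)*z^37 + (-1788131283872504604004)*z^38 + (-1387949971470821833384)*z^39) * (13*z^20 + 8*z^19 - 6*z^17 - 3*z^16 + 3*z^15 + 3*z^14 + 8*z^13 - 2*z^11 - 3*z^10 - 2*z^9 + 8*z^7 + 3*z^6 + 3*z^5 - 3*z^4 - 6*z^3 + 8*z + 13) + ((8183864861024240175053) + (10469756021617502216556)*z + (21246663265432766718126)*z^2 + (37361438429058174887355)*z^3 + (34000710696725442916362)*z^4 + (18404768276996769231825)*z^5 + (11443458751462639348308)*z^6 + (-7317690898503049205624)*z^7 + (-18501968635621099162064)*z^8 + (-12610342938008968379196)*z^9 + (-19483857074428170694959)*z^10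 + (-15837905669742232435216)*z^11 + (-11963042907641631071461)*z^12 + (-2503253511982128559878)*z^13 + (1330035543713691406635)*z^14 + (21776198007922631373018)*z^15 + (32835212037794767538445)*z^16 + (28846251774654797743509)*z^17 + (34349306462109134519124)*z^18 + (18043349629120683833992)*z^19) * (z ^ 40 - 1) = (5238372207981586887675 : ℂ) := by ring
  rw [h1, h2] at key
  norm_num at key

private lemma cert42 (z : ℂ) (h1 : 13*z^20 + 8*z^19 - 6*z^17 - 3*z^16 + 3*z^15 + 3*z^14 + 8*z^13 - 2*z^11 - 3*z^10 - 2*z^9 + 8*z^7 + 3*z^6 + 3*z^5 - 3*z^4 - 6*z^3 + 8*z + 13 = 0) (h2 : z ^ 42 = 1) : False := by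
  have key : ((24474199271103948285319) + (-33409434340646684836421)*z + (24554946484494557048074)*z^2 + (9662876625182024227099)*z^3 + (-27988098247334800991561)*z^4 + (-4306862132108570252606)*z^5 + (18302932644916662167359)*z^6 + (-30796030835204995389821)*z^7 + (16680652140214131735154)*z^8 + (-23256737935657880166581)*z^9 + (18449636802295755513559)*z^10 + (1355166849427075603354)*z^11 + (18449636802295755513559)*z^12 + (-23256737935657880166581)*z^13 + (16680652140214131735154)*z^14 + (-30796030835204995389821)*z^15 + (18302932644916662167359)*z^16 + (-4306862132108570252606)*z^17 + (-27988098247334800991561)*z^18 + (9662876625182024227099)*z^19 + (24554946484494557048074)*z^20 + (-33409434340646684836421)*z^21 + (24474199271103948285319)*z^22 + (-6205803472777918455446)*z^23 + (17028273560028739468159)*z^24 + (-19839304764799714338701)*z^25 + (13826444252532537081874)*z^26 + (2589114156113008908139)*z^27 + (26871995511586308664039)*z^28 + (-23544854636537405392286)*z^29 + (4721015954987136877279)*z^30 + (2713207750676481950059)*z^31 + (-10982754776549345631926)*z^32 + (2713207750676481950059)*z^33 + (4721015954987136877279)*z^34 + (-23544854636537405392286)*z^35 + (26871995511586308664039)*z^36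 + (2589114156113008908139)*z^37 + (13826444252532537081874)*z^38 + (-19839304764799714338701)*z^39 + (17028273560028739468159)*z^40 + (-6205803472777918455446)*z^41) * (13*z^20 + 8*z^19 - 6*z^17 - 3*z^16 + 3*z^15 + 3*z^14 + 8*z^13 - 2*z^11 - 3*z^10 - 2*z^9 + 8*z^7 + 3*z^6 + 3*z^5 - 3*z^4 - 6*z^3 + 8*z + 13) + ((-196129143770845510247213) + (-238529052259575316590921)*z + (51938829573255762933594)*z^2 + (175211772376699081624965)*z^3 + (-159508255983327954910932)*z^4 + (-253572771767805264139590)*z^5 + (45035422913844019994697)*z^6 + (54245150510506293456779)*z^7 + (-84336306720344160937096)*z^8 + (-173273877047723421010089)*z^9 + (157473164752169371081644)*z^10 + (-22228119804262865635139)*z^11 + (242079168768278400683311)*z^12 + (82080487141339417224408)*z^13 + (-419382452389904396159010)*z^14 + (-60717807107890731018183)*z^15 + (-58264158001192778087430)*z^16 + (121684773462166370657841)*z^17 + (-171721128498150265442499)*z^18 + (80675445146112939920798)*z^19) * (z ^ 42 - 1) = (514293734295196837956360 : ℂ) := by ring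
  rw [h1, h2] at key
  norm_num at key

private lemma cert44 (z : ℂ) (h1 : 13*z^20 + 8*z^19 - 6*z^17 - 3*z^16 + 3*z^15 + 3*z^14 + 8*z^13 - 2*z^11 - 3*z^10 - 2*z^9 + 8*z^7 + 3*z^6 + 3*z^5 - 3*z^4 - 6*z^3 + 8*z + 13 = 0) (h2 : z ^ 44 = 1) : False := by
  have key : ((24829426521527123090284181) + (-29792167037690399286004324)*z + (19219364623945094415663581)*z^2 + (-3059428961559856564549369)*z^3 + (-15863370394852887649539949)*z^4 + (16252182295162540224615746)*z^5 + (-8361531851281958580048604)*z^6 + (-13276034627746413858178789)*z^7 + (29666534856280308676442681)*z^8 + (-27089338777224829141812994)*z^9 + (11113016196892255508008646)*z^10 + (7463920768242807896552456)*z^11 + (-19682160578003036795422834)*z^12 + (7463920768242807896552456)*z^13 + (11113016196892255508008646)*z^14 + (-27089338777224829141812994)*z^15 + (29666534856280308676442681)*z^16 + (-13276034627746413858178789)*z^17 + (-8361531851281958580048604)*z^18 + (16252182295162540224615746)*z^19 + (-15863370394852887649539949)*z^20 + (-3059428961559856564549369)*z^21 + (19219364623945094415663581)*z^22 + (-29792167037690399286004324)*z^23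 + (24829426521527123090284181)*z^24 + (2122380390656959879998896)*z^25 + (-10799968747186434848533714)*z^26 + (15329652841745644296017276)*z^27 + (-1583263294365006264810079)*z^28 + (-15859519673063883743823949)*z^29 + (22703858809264614024472481)*z^30 + (-19742560587153300873711349)*z^31 + (5918147506886408596926296)*z^32 + (10819391831835152770459241)*z^33 + (-15172722844734333214121419)*z^34 + (10819391831835152770459241)*z^35 + (5918147506886408596926296)*z^36 + (-19742560587153300873711349)*z^37 + (22703858809264614024472481)*z^38 + (-15859519673063883743823949)*z^39 + (-1583263294365006264810079)*z^40 + (15329652841745644296017276)*z^41 + (-10799968747186434848533714)*z^42 + (2122380390656959879998896)*z^43) * (13*z^20 + 8*z^19 - 6*z^17 - 3*z^16 + 3*z^15 + 3*z^14 + 8*z^13 - 2*z^11 - 3*z^10 - 2*z^9 + 8*z^7 + 3*z^6 + 3*z^5 - 3*z^4 - 6*z^3 + 8*z + 13) + ((90289956674779779444633248) + (-188662759317758205995782764)*z + (11514403809763033115591961)*z^2 + (-34994218637880118555538235)*z^3 + (-126434524164005365515240888)*z^4 + (132919999612271922358569135)*z^5 + (-32872197356331112190560842)*z^6 + (31794809213818916905425931)*z^7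 + (39676164208888642794557956)*z^8 + (-66088815152207902123110756)*z^9 + (-5717637818625418131184464)*z^10 + (-54192098697202657181369341)*z^11 + (-49470436222708533410166841)*z^12 + (137544560987511319367263497)*z^13 + (-115063137498985230777044835)*z^14 + (160407190793602809336986373)*z^15 + (-89320517563278313645613805)*z^16 + (-112885736965201897059954876)*z^17 + (123420550588167973990947114)*z^18 + (-27590945078540478439985648)*z^19) * (z ^ 44 - 1) = (232492588105072820729061105 : ℂ) := by ring
  rw [h1, h2] at key
  norm_num at key

private lemma cert48 (z : ℂ) (h1 : 13*z^20 + 8*z^19 - 6*z^17 - 3*z^16 + 3*z^15 + 3*z^14 + 8*z^13 - 2*z^11 - 3*z^10 - 2*z^9 + 8*z^7 + 3*z^6 + 3*z^5 - 3*z^4 - 6*z^3 + 8*z + 13 = 0) (h2 : z ^ 48 = 1) : False := by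
  have key : ((12169151089137375407861563) + (-20373931335038867883329777)*z + (5234078687793887723843098)*z^2 + (11787204659406733948023343)*z^3 + (7052164596335075556169243)*z^4 + (-9457173234710260964265302)*z^5 + (-2583972004096602005579117)*z^6 + (-16897216008753478094353577)*z^7 + (17428269735876742417168858)*z^8 + (2569075744395570152977063)*z^9 + (-1958657300976705391265597)*z^10 + (-5899798521422134439382422)*z^11 + (-2994065227516318731640277)*z^12 + (-10795622927585174662988897)*z^13 + (27562235822409602617830298)*z^14 + (-10795622927585174662988897)*z^15 + (-2994065227516318731640277)*z^16 + (-5899798521422134439382422)*z^17 + (-1958657300976705391265597)*z^18 + (2569075744395570152977063)*z^19 + (17428269735876742417168858)*z^20 + (-16897216008753478094353577)*z^21 + (-2583972004096602005579117)*z^22 + (-9457173234710260964265302)*z^23 + (7052164596335075556169243)*z^24 + (11787204659406733948023343)*z^25 + (5234078687793887723843098)*z^26 + (-20373931335038867883329777)*z^27 + (12169151089137375407861563)*z^28 + (-4498551679904250580376342)*z^29 + (11642786454171314789298163)*z^30 + (5096453840484915344943223)*z^31 + (-6618430902020263103647142)*z^32 + (-14189300080779047537413817)*z^33 + (8214195266905391189499043)*z^34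 + (2334070741702714774684138)*z^35 + (11427481989411624001382923)*z^36 + (-5664888533474995722225857)*z^37 + (-7609824345125342663530982)*z^38 + (-5664888533474995722225857)*z^39 + (11427481989411624001382923)*z^40 + (2334070741702714774684138)*z^41 + (8214195266905391189499043)*z^42 + (-14189300080779047537413817)*z^43 + (-6618430902020263103647142)*z^44 + (5096453840484915344943223)*z^45 + (11642786454171314789298163)*z^46 + (-4498551679904250580376342)*z^47) * (13*z^20 + 8*z^19 - 6*z^17 - 3*z^16 + 3*z^15 + 3*z^14 + 8*z^13 - 2*z^11 - 3*z^10 - 2*z^9 + 8*z^7 + 3*z^6 + 3*z^5 - 3*z^4 - 6*z^3 + 8*z + 13) + ((-111758806759897974685696961) + (-167507898642406279220394597)*z + (-94948427738990402656677942)*z^2 + (122091383539814390667878865)*z^3 + (271711911770430934890780876)*z^4 + (-301160134787384555579550)*z^5 + (-220288826688464458072724931)*z^6 + (-266076534931434623667882457)*z^7 + (15048723476917087734411728)*z^8 + (290751929384168525739922707)*z^9 + (195548293870071990623195988)*z^10 + (-99635394069787318135647983)*z^11 + (-286450232431442590510588853)*z^12 + (-141910409990846446800704784)*z^13 + (85732599621598483014505830)*z^14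 + (293769411951604859810216709)*z^15 + (18276660922958594105609010)*z^16 + (-159396191559674417798647203)*z^17 + (-115367810464993087617865383)*z^18 + (58481171838755257544892446)*z^19) * (z ^ 48 - 1) = (269957770918683854987897280 : ℂ) := by ring
  rw [h1, h2] at key
  norm_num at key

private lemma cert50 (z : ℂ) (h1 : 13*z^20 + 8*z^19 - 6*z^17 - 3*z^16 + 3*z^15 + 3*z^14 + 8*z^13 - 2*z^11 - 3*z^10 - 2*z^9 + 8*z^7 + 3*z^6 + 3*z^5 - 3*z^4 - 6*z^3 + 8*z + 13 = 0) (h2 : z ^ 50 = 1) : False := by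
  have key : ((32025878192275771947872340242) + (4535272431198919649123439437)*z + (-7067962146724830095323645753)*z^2 + (-18333881635509735428341426003)*z^3 + (15801051945024183462387380687)*z^4 + (20305029971576744521640639867)*z^5 + (-10901876344542342262230926488)*z^6 + (-32268993233622004909069350478)*z^7 + (18945275975249118657839568722)*z^8 + (14342088014753406166374866237)*z^9 + (-4467926880271865584410905383)*z^10 + (-22146461368998926026816625038)*z^11 + (2372774568603357709012687922)*z^12 + (20594865035160357334746060197)*z^13 + (9651685880557026671774471912)*z^14 + (-40074587321130370845207424258)*z^15 + (9651685880557026671774471912)*z^16 + (20594865035160357334746060197)*z^17 + (2372774568603357709012687922)*z^18 + (-22146461368998926026816625038)*z^19 + (-4467926880271865584410905383)*z^20 + (14342088014753406166374866237)*z^21 + (18945275975249118657839568722)*z^22 + (-32268993233622004909069350478)*z^23 + (-10901876344542342262230926488)*z^24 + (20305029971576744521640639867)*z^25 + (15801051945024183462387380687)*z^26 + (-18333881635509735428341426003)*z^27 + (-7067962146724830095323645753)*z^28 + (4535272431198919649123439437)*z^29 + (32025878192275771947872340242)*z^30 + (-15834800831707882551409501363)*z^31 + (-23077097094615572664221948728)*z^32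 + (9943634760144441678613450847)*z^33 + (23851851911286270536678736737)*z^34 + (-11449184131124181632125759633)*z^35 + (-17669961567879997322911700788)*z^36 + (-462743499215420602106089453)*z^37 + (29240494945031696497518202697)*z^38 + (-3203469437314002132863217463)*z^39 + (-24465963817063835547854325883)*z^40 + (-3203469437314002132863217463)*z^41 + (29240494945031696497518202697)*z^42 + (-462743499215420602106089453)*z^43 + (-17669961567879997322911700788)*z^44 + (-11449184131124181632125759633)*z^45 + (23851851911286270536678736737)*z^46 + (9943634760144441678613450847)*z^47 + (-23077097094615572664221948728)*z^48 + (-15834800831707882551409501363)*z^49) * (13*z^20 + 8*z^19 - 6*z^17 - 3*z^16 + 3*z^15 + 3*z^14 + 8*z^13 - 2*z^11 - 3*z^10 - 2*z^9 + 8*z^7 + 3*z^6 + 3*z^5 - 3*z^4 - 6*z^3 + 8*z + 13) + ((195362126378216297052551775521) + (315165567143792131021583434617)*z + (-55601328457831434046219879293)*z^2 + (-487039427589079833018261745515)*z^3 + (-64546646962784332154053116441)*z^4 + (515253395354270683948615940700)*z^5 + (261606475417220484411129906906)*z^6 + (-297907633165412252160670871243)*z^7 + (-221020045752382853615654091473)*z^8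 + (214311577516504208877857467728)*z^9 + (139472256336351798358254796287)*z^10 + (-249415861933191628418872251112)*z^11 + (-207485241687498514465504762477)*z^12 + (437053067559961760313479892429)*z^13 + (359237893203576997988101550295)*z^14 + (-227942406648492886715355215124)*z^15 + (-484631957918124345714188192535)*z^16 + (55349524875046839491800728813)*z^17 + (426680668883665505046161344368)*z^18 + (205852410812202473168323517719)*z^19) * (z ^ 50 - 1) = (220974290121368738269788647625 : ℂ) := by ring
  rw [h1, h2] at key
  norm_num at key

private lemma cert54 (z : ℂ) (h1 : 13*z^20 + 8*z^19 - 6*z^17 - 3*z^16 + 3*z^15 + 3*z^14 + 8*z^13 - 2*z^11 - 3*z^10 - 2*z^9 + 8*z^7 + 3*z^6 + 3*z^5 - 3*z^4 - 6*z^3 + 8*z + 13 = 0) (h2 : z ^ 54 = 1) : False := by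
  have key : ((74814892126549477337416667111) + (-70540671485822608135459031869)*z + (38883788101071074455169043986)*z^2 + (-91191752705999312115588173629)*z^3 + (66566822241571790979478126391)*z^4 + (-91482306682135303742412297934)*z^5 + (60436416556959124079432484431)*z^6 + (-65828587204020978730908695269)*z^7 + (12645989812966636788901487666)*z^8 + (114885598586130361030073030171)*z^9 + (-89849459755690967583483522049)*z^10 + (87902204315283652796292146066)*z^11 + (-21986623467017535503258145649)*z^12 + (-14033298483156674808044986789)*z^13 + (73603830124975569368573392586)*z^14 + (-117925302739427236113722745229)*z^15 + (47617595525820221448638144111)*z^16 + (-62451923641735533974116658614)*z^17 + (47617595525820221448638144111)*z^18 + (-117925302739427236113722745229)*z^19 + (73603830124975569368573392586)*z^20 + (-14033298483156674808044986789)*z^21 + (-21986623467017535503258145649)*z^22 + (87902204315283652796292146066)*z^23 + (-89849459755690967583483522049)*z^24 + (114885598586130361030073030171)*z^25 + (12645989812966636788901487666)*z^26 + (-65828587204020978730908695269)*z^27 + (60436416556959124079432484431)*z^28 + (-91482306682135303742412297934)*z^29 + (66566822241571790979478126391)*z^30 + (-91191752705999312115588173629)*z^31 + (38883788101071074455169043986)*z^32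 + (-70540671485822608135459031869)*z^33 + (74814892126549477337416667111)*z^34 + (17224041489869859801826552226)*z^35 + (-54147023608643041738584960649)*z^36 + (122693704470621945758973831371)*z^37 + (-53969044641027127626993761494)*z^38 + (54916750963639926990879595451)*z^39 + (-14287427494267001893078347289)*z^40 + (-42455045970002848030493299174)*z^41 + (78067913687412581946828058271)*z^42 + (-99052290349255259789158031869)*z^43 + (35986216592117629311050849066)*z^44 + (-99052290349255259789158031869)*z^45 + (78067913687412581946828058271)*z^46 + (-42455045970002848030493299174)*z^47 + (-14287427494267001893078347289)*z^48 + (54916750963639926990879595451)*z^49 + (-53969044641027127626993761494)*z^50 + (122693704470621945758973831371)*z^51 + (-54147023608643041738584960649)*z^52 + (17224041489869859801826552226)*z^53) * (13*z^20 + 8*z^19 - 6*z^17 - 3*z^16 + 3*z^15 + 3*z^14 + 8*z^13 - 2*z^11 - 3*z^10 - 2*z^9 + 8*z^7 + 3*z^6 + 3*z^5 - 3*z^4 - 6*z^3 + 8*z + 13) + ((47586207401379487807687616963) + (-318509592303298087061634077409)*z + (-58836126572656897166474683134)*z^2 + (-1323311833128719325885793907955)*z^3 + (334634020027726002609014443932)*z^4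 + (-453971446704494811127922028990)*z^5 + (497136775638349440027218729673)*z^6 + (5442510330108677262005972731)*z^7 + (-734286722396870680140440457944)*z^8 + (1594074849990266032010992156719)*z^9 + (-922939722959379441152386668204)*z^10 + (969164362346695370811338126309)*z^11 + (-851081512822478192476301105881)*z^12 + (821250809486195656866273817992)*z^13 + (268451581244544578615590200750)*z^14 + (-555375422581350700891514756127)*z^15 + (-176607806492403748109912438190)*z^16 + (-1161841969248940960957980122631)*z^17 + (566118974993400664186992070629)*z^18 + (-223912539368308177423745178938)*z^19) * (z ^ 54 - 1) = (925007390243763717578729055480 : ℂ) := by ring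
  rw [h1, h2] at key
  norm_num at key

private lemma cert60 (z : ℂ) (h1 : 13*z^20 + 8*z^19 - 6*z^17 - 3*z^16 + 3*z^15 + 3*z^14 + 8*z^13 - 2*z^11 - 3*z^10 - 2*z^9 + 8*z^7 + 3*z^6 + 3*z^5 - 3*z^4 - 6*z^3 + 8*z + 13 = 0) (h2 : z ^ 60 = 1) : False := by
  have key : ((2939182881948929100914188353749) + (-1285807176946293241734606852511)*z + (-370387973500880459934223478266)*z^2 + (3590685124740498808794528828209)*z^3 + (-788305054185172685136692620411)*z^4 + (-1435948955383362665991827055226)*z^5 + (2972740706190603265789696703789)*z^6 + (-3939515723014714188840460346791)*z^7 + (-83399108029512050430447467866)*z^8 + (2175129519384022908066653894489)*z^9 + (-2400520151976285370152709248451)*z^10 + (1537594860829233489691194904214)*z^11 + (3178509189213779307871103683109)*z^12 + (-4005214312210330740445046962591)*z^13 + (3192844686485838124683809355014)*z^14 + (-951819283922064512219498622751)*z^15 + (-3348258793917037301646230774011)*z^16 + (2535904567418644473980048425334)*z^17 + (-926343184088943645594125022691)*z^18 + (-2512431580720070388856156076311)*z^19 + (5305742794679079534745802719574)*z^20 + (-2512431580720070388856156076311)*z^21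 + (-926343184088943645594125022691)*z^22 + (2535904567418644473980048425334)*z^23 + (-3348258793917037301646230774011)*z^24 + (-951819283922064512219498622751)*z^25 + (3192844686485838124683809355014)*z^26 + (-4005214312210330740445046962591)*z^27 + (3178509189213779307871103683109)*z^28 + (1537594860829233489691194904214)*z^29 + (-2400520151976285370152709248451)*z^30 + (2175129519384022908066653894489)*z^31 + (-83399108029512050430447467866)*z^32 + (-3939515723014714188840460346791)*z^33 + (2972740706190603265789696703789)*z^34 + (-1435948955383362665991827055226)*z^35 + (-788305054185172685136692620411)*z^36 + (3590685124740498808794528828209)*z^37 + (-370387973500880459934223478266)*z^38 + (-1285807176946293241734606852511)*z^39 + (2939182881948929100914188353749)*z^40 + (-2798382179598975005597815042186)*z^41 + (-102712934865351635345822605891)*z^42 + (863203805359790431422257145209)*z^43 + (-1433390588798913275608944344986)*z^44 + (952138411703505723742592630249)*z^45 + (2066328157775488910681027218589)*z^46 + (-1680620518256985241190793455866)*z^47 + (925301368432020486951310911509)*z^48 + (19765902959490639970631688689)*z^49 + (-2447802708218657925212335986826)*z^50 + (19765902959490639970631688689)*z^51 + (925301368432020486951310911509)*z^52 + (-1680620518256985241190793455866)*z^53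 + (2066328157775488910681027218589)*z^54 + (952138411703505723742592630249)*z^55 + (-1433390588798913275608944344986)*z^56 + (863203805359790431422257145209)*z^57 + (-102712934865351635345822605891)*z^58 + (-2798382179598975005597815042186)*z^59) * (13*z^20 + 8*z^19 - 6*z^17 - 3*z^16 + 3*z^15 + 3*z^14 + 8*z^13 - 2*z^11 - 3*z^10 - 2*z^9 + 8*z^7 + 3*z^6 + 3*z^5 - 3*z^4 - 6*z^3 + 8*z + 13) + ((9837623902191312137850506743937) + (6797969755289620664763617747349)*z + (-15101501071081791913021760037546)*z^2 + (26080705541925866229369956818095)*z^3 + (17374809709347717711244302614148)*z^4 + (-10076478835774146351435566192850)*z^5 + (11685217824478497231905682676707)*z^6 + (-14929126194527006941864825802471)*z^7 + (-22245271255497167002254398434256)*z^8 + (13646564176523746294331565918141)*z^9 + (16719931076161132385919003137964)*z^10 + (10127280325074090035411884403711)*z^11 + (22934289885572393771341245263381)*z^12 + (8009994701815768413476115487488)*z^13 + (-21213142778349788929504574703510)*z^14 + (-9922098789743303032650530195253)*z^15 + (-5061845866086300902048670929970)*z^16 + (-10399945990754462525722762040589)*z^17 + (23722325590041371304278214214071)*z^18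 + (36378968334786675072771595548418)*z^19) * (z ^ 60 - 1) = (28371753563144766174033941854800 : ℂ) := by ring
  rw [h1, h2] at key
  norm_num at key

private lemma cert66 (z : ℂ) (h1 : 13*z^20 + 8*z^19 - 6*z^17 - 3*z^16 + 3*z^15 + 3*z^14 + 8*z^13 - 2*z^11 - 3*z^10 - 2*z^9 + 8*z^7 + 3*z^6 + 3*z^5 - 3*z^4 - 6*z^3 + 8*z + 13 = 0) (h2 : z ^ 66 = 1) : False := by
  have key : ((19667949555755070859132258729645681) + (111430491057338160819013488616501)*z + (43391344270649507575766433716376646)*z^2 + (-35340856254071457386949426985726859)*z^3 + (65094218102981950121656110955885561)*z^4 + (34010193826009737725793140859693886)*z^5 + (-61406626029528736675495371645107639)*z^6 + (42546658079777521482972676157042341)*z^7 + (48047714576340582743593118139437326)*z^8 + (-92610063494782942762755957046134059)*z^9 + (50988125185484052868355276306774641)*z^10 + (24150792929479887923811777495691486)*z^11 + (-66548726364019358524942654441251479)*z^12 + (42208451233289626325793563178765901)*z^13 + (17271426588385010160150211544694046)*z^14 + (-45612084156057097488826170477456419)*z^15 + (76747306800899229591176912489549761)*z^16 + (-56744493936283455774539084999345834)*z^17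 + (28422170989429516443866549155866481)*z^18 + (36847840809881251502815334217690421)*z^19 + (-90240677832917573308926463263267554)*z^20 + (26784137643564487193873922188281141)*z^21 + (41355311533743082964910281224391161)*z^22 + (-141463393726396156845408549794669354)*z^23 + (41355311533743082964910281224391161)*z^24 + (26784137643564487193873922188281141)*z^25 + (-90240677832917573308926463263267554)*z^26 + (36847840809881251502815334217690421)*z^27 + (28422170989429516443866549155866481)*z^28 + (-56744493936283455774539084999345834)*z^29 + (76747306800899229591176912489549761)*z^30 + (-45612084156057097488826170477456419)*z^31 + (17271426588385010160150211544694046)*z^32 + (42208451233289626325793563178765901)*z^33 + (-66548726364019358524942654441251479)*z^34 + (24150792929479887923811777495691486)*z^35 + (50988125185484052868355276306774641)*z^36 + (-92610063494782942762755957046134059)*z^37 + (48047714576340582743593118139437326)*z^38 + (42546658079777521482972676157042341)*z^39 + (-61406626029528736675495371645107639)*z^40 + (34010193826009737725793140859693886)*z^41 + (65094218102981950121656110955885561)*z^42 + (-35340856254071457386949426985726859)*z^43 + (43391344270649507575766433716376646)*z^44 + (111430491057338160819013488616501)*z^45 + (19667949555755070859132258729645681)*z^46 + (6335509941896924765592117212285566)*z^47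 + (-38057137047679603814713979631198719)*z^48 + (4004515881763214794984709828931421)*z^49 + (9411007653292205416826600489707966)*z^50 + (-54865975548020341007125360650895019)*z^51 + (-654634207828678775535224921915999)*z^52 + (27210377219988393554527242214385446)*z^53 + (-27888359041672779396905699599154879)*z^54 + (-23019919287571740648836175316973459)*z^55 + (50476368180224388174654729794324086)*z^56 + (-23019919287571740648836175316973459)*z^57 + (-27888359041672779396905699599154879)*z^58 + (27210377219988393554527242214385446)*z^59 + (-654634207828678775535224921915999)*z^60 + (-54865975548020341007125360650895019)*z^61 + (9411007653292205416826600489707966)*z^62 + (4004515881763214794984709828931421)*z^63 + (-38057137047679603814713979631198719)*z^64 + (6335509941896924765592117212285566)*z^65) * (13*z^20 + 8*z^19 - 6*z^17 - 3*z^16 + 3*z^15 + 3*z^14 + 8*z^13 - 2*z^11 - 3*z^10 - 2*z^9 + 8*z^7 + 3*z^6 + 3*z^5 - 3*z^4 - 6*z^3 + 8*z + 13) + ((-295424216388588883625269991874760667) + (158792192829785962963705245189179961)*z + (564978919446902303771515746221828406)*z^2 + (-230308074472263310579004633461310085)*z^3 + (503825553692584450943623169420061372)*z^4 + (761207756132178344048900852247932670)*z^5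 + (-384995342922878226320843627088830457)*z^6 + (65162727676361661388407843554701421)*z^7 + (590692644843836326663767895144085336)*z^8 + (-156084993521892989999502685010482071)*z^9 + (-193735274832026258137061469993179844)*z^10 + (618050616957052337817806350523384539)*z^11 + (-104623396583832677134265333653798991)*z^12 + (-184853355314828771971293029729901288)*z^13 + (338287203407785255167950777635203810)*z^14 + (428633328437539941166509358393635903)*z^15 + (-116366166895522840185070781723941530)*z^16 + (252398389918515038182910609273481279)*z^17 + (444058702084659451466544797507298819)*z^18 + (-82361629244660021952697523759712358)*z^19) * (z ^ 66 - 1) = (551107560613404804793989355360154520 : ℂ) := by ring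
  rw [h1, h2] at key
  norm_num at key


private def Fl : List Nat := [23, 29, 31, 35, 37, 39, 41, 43, 45, 47, 49, 51, 52, 53, 55, 56, 57, 59, 61, 63, 64, 65, 67, 68, 71, 72, 73, 75, 76, 77, 79, 80, 81, 83, 84, 85, 88, 89, 91, 95, 96, 97, 99, 100, 101, 103, 107, 108, 109, 113, 119, 120, 121, 125, 127, 131, 132, 133, 137, 139, 143, 149, 151, 157, 163, 167, 169, 173, 179, 181, 187, 191, 193, 197, 199, 209, 211, 221, 223, 227, 229, 233, 239, 241, 247, 251, 257, 263, 269, 271, 277, 281, 283, 289, 293, 307, 311, 313, 317, 323, 331, 337, 347, 349, 353, 359, 361, 367, 373, 379, 383, 389, 397, 401, 409, 419, 421, 431, 433, 439, 443, 449, 457, 461, 463, 467, 479, 487, 491, 499, 503, 509, 521, 523, 541, 547, 557, 563, 569, 571, 577, 587, 593, 599, 601, 607, 613, 617, 619, 631, 641, 643, 647, 653, 659, 661, 673, 677, 683, 691, 701, 709, 719, 727, 733, 739, 743, 751, 757, 761, 769, 773, 787, 797]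

private lemma cover0 : ∀ m ∈ Finset.Icc 67 158, ∃ d ∈ Fl, d ∣ m := by decide
private lemma cover1 : ∀ m ∈ Finset.Icc 159 250, ∃ d ∈ Fl, d ∣ m := by decide
private lemma cover2 : ∀ m ∈ Finset.Icc 251 342, ∃ d ∈ Fl, d ∣ m := by decide
private lemma cover3 : ∀ m ∈ Finset.Icc 343 434, ∃ d ∈ Fl, d ∣ m := by decide
private lemma cover4 : ∀ m ∈ Finset.Icc 435 526, ∃ d ∈ Fl, d ∣ m := by decide
private lemma cover5 : ∀ m ∈ Finset.Icc 527 618, ∃ d ∈ Fl, d ∣ m := by decide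
private lemma cover6 : ∀ m ∈ Finset.Icc 619 710, ∃ d ∈ Fl, d ∣ m := by decide
private lemma cover7 : ∀ m ∈ Finset.Icc 711 800, ∃ d ∈ Fl, d ∣ m := by decide

private lemma coverAll : ∀ m : ℕ, 66 < m → m ≤ 800 → ∃ d ∈ Fl, d ∣ m := by
  intro m h1 h2
  rcases Nat.lt_or_ge m 159 with h|h
  · exact cover0 m (Finset.mem_Icc.2 ⟨by omega, by omega⟩)
  rcases Nat.lt_or_ge m 251 with h|h
  · exact cover1 m (Finset.mem_Icc.2 ⟨by omega, by omega⟩)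
  rcases Nat.lt_or_ge m 343 with h|h
  · exact cover2 m (Finset.mem_Icc.2 ⟨by omega, by omega⟩)
  rcases Nat.lt_or_ge m 435 with h|h
  · exact cover3 m (Finset.mem_Icc.2 ⟨by omega, by omega⟩)
  rcases Nat.lt_or_ge m 527 with h|h
  · exact cover4 m (Finset.mem_Icc.2 ⟨by omega, by omega⟩)
  rcases Nat.lt_or_ge m 619 with h|h
  · exact cover5 m (Finset.mem_Icc.2 ⟨by omega, by omega⟩)
  rcases Nat.lt_or_ge m 711 with h|h
  · exact cover6 m (Finset.mem_Icc.2 ⟨by omega, by omega⟩)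
  · exact cover7 m (Finset.mem_Icc.2 ⟨by omega, by omega⟩)

private lemma badF : ∀ d ∈ Fl, 20 < Nat.totient d := by decide

private lemma small_case : ∀ m ∈ Finset.Icc 1 66, Nat.totient m ≤ 20 → (m ∣ 26 ∨ m ∣ 28 ∨ m ∣ 32 ∨ m ∣ 34 ∨ m ∣ 36 ∨ m ∣ 38 ∨ m ∣ 40 ∨ m ∣ 42 ∨ m ∣ 44 ∨ m ∣ 48 ∨ m ∣ 50 ∨ m ∣ 54 ∨ m ∣ 60 ∨ m ∣ 66) := by decide

private lemma tot_bound : ∀ m : ℕ, m ≤ 2 * Nat.totient m ^ 2 ∧ (Odd m → m ≤ Nat.totient m ^ 2) := by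
  refine Nat.recOnPosPrimePosCoprime ?_ ?_ ?_ ?_
  · -- prime power
    intro p n hp hn
    have hpp : p.Prime := hp
    obtain ⟨k, rfl⟩ : ∃ k, n = k + 1 := ⟨n - 1, by omega⟩
    have ht : Nat.totient (p ^ (k+1)) = p ^ k * (p - 1) := by
      rw [Nat.totient_prime_pow hpp (by omega)]
      congr 1
    rcases eq_or_ne p 2 with rfl | hodd
    · constructor
      · rw [ht]
        have h1 : 2 ^ (k+1) ≤ 2 ^ (2*k+1) := Nat.pow_le_pow_right (by norm_num) (by omega)
        have h2 : 2 * (2 ^ k * (2-1)) ^ 2 = 2 ^ (2*k+1) := by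
          rw [show (2-1 : ℕ) = 1 from rfl, mul_one, ← pow_mul, ← pow_succ']
          congr 1
          omega
        omega
      · intro hoddp
        exfalso
        have h2 : 2 ∣ 2 ^ (k+1) := dvd_pow_self 2 (by omega)
        obtain ⟨t, ht2⟩ := hoddp
        omega
    · have h3 : 3 ≤ p := by have := hpp.two_le; omega
      have hq : 2 ≤ p - 1 := by omega
      have e1 : 1 ≤ p ^ k := Nat.one_le_pow _ _ (by omega)
      have hple : p ≤ (p-1) * (p-1) := by
        have h5 : p - 1 + 1 = p := by omega
        have h6 : 2*(p-1) ≤ (p-1)*(p-1) := Nat.mul_le_mul_right _ hq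
        linarith
      have key : p ^ (k+1) ≤ (p ^ k * (p - 1)) ^ 2 := by
        calc p ^ (k+1) = p ^ k * p := pow_succ p k
        _ ≤ p ^ k * ((p-1) * (p-1)) := Nat.mul_le_mul_left _ hple
        _ ≤ (p ^ k * p ^ k) * ((p-1) * (p-1)) := by
            apply Nat.mul_le_mul_right
            exact Nat.le_mul_of_pos_left _ (by omega)
        _ = (p ^ k * (p - 1)) ^ 2 := by ring
      rw [ht]
      exact ⟨by omega, fun _ => key⟩
  · exact ⟨by simp, by simp [Nat.odd_iff]⟩
  · exact ⟨by simp, fun _ => by simp⟩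
  · -- coprime
    intro a b ha hb hco Pa Pb
    have hs : Nat.totient a * Nat.totient b ≤ Nat.totient (a*b) :=
      Nat.totient_super_multiplicative a b
    have hs2 : (Nat.totient a * Nat.totient b) ^ 2 ≤ Nat.totient (a*b) ^ 2 :=
      Nat.pow_le_pow_left hs 2
    have hodd : Odd (a*b) → a * b ≤ Nat.totient (a*b) ^ 2 := by
      intro h
      obtain ⟨hoa, hob⟩ := Nat.odd_mul.mp h
      calc a * b ≤ Nat.totient a ^ 2 * Nat.totient b ^ 2 :=
            Nat.mul_le_mul (Pa.2 hoa) (Pb.2 hob)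
      _ = (Nat.totient a * Nat.totient b) ^ 2 := by ring
      _ ≤ _ := hs2
    refine ⟨?_, hodd⟩
    rcases Nat.even_or_odd a with hea | hoa
    · have hob : Odd b := by
        rcases Nat.even_or_odd b with heb | hob
        · exfalso
          have h2 : (2:ℕ) ∣ 1 := hco ▸ Nat.dvd_gcd hea.two_dvd heb.two_dvd
          omega
        · exact hob
      calc a * b ≤ (2 * Nat.totient a ^ 2) * Nat.totient b ^ 2 :=
            Nat.mul_le_mul Pa.1 (Pb.2 hob)
      _ = 2 * (Nat.totient a * Nat.totient b) ^ 2 := by ring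
      _ ≤ 2 * Nat.totient (a*b) ^ 2 := by omega
    · rcases Nat.even_or_odd b with heb | hob
      · calc a * b ≤ Nat.totient a ^ 2 * (2 * Nat.totient b ^ 2) :=
            Nat.mul_le_mul (Pa.2 hoa) Pb.1
        _ = 2 * (Nat.totient a * Nat.totient b) ^ 2 := by ring
        _ ≤ 2 * Nat.totient (a*b) ^ 2 := by omega
      · have := hodd (Nat.odd_mul.mpr ⟨hoa, hob⟩)
        omega

private lemma pow_dvd_one (z : ℂ) (m M : ℕ) (h : z ^ m = 1) (hd : m ∣ M) : z ^ M = 1 := by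
  obtain ⟨k, rfl⟩ := hd
  rw [pow_mul, h, one_pow]

private lemma g_no_ru (z : ℂ)
    (h0 : 13*z^20 + 8*z^19 - 6*z^17 - 3*z^16 + 3*z^15 + 3*z^14 + 8*z^13 - 2*z^11 - 3*z^10 - 2*z^9 + 8*z^7 + 3*z^6 + 3*z^5 - 3*z^4 - 6*z^3 + 8*z + 13 = 0)
    (n : ℕ) (hn : 0 < n) (hzn : z ^ n = 1) : False := by
  have hfin : IsOfFinOrder z := isOfFinOrder_iff_pow_eq_one.mpr ⟨n, hn, hzn⟩
  have hmpos : 0 < orderOf z := hfin.orderOf_pos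
  set m := orderOf z with hmdef
  have hprim : IsPrimitiveRoot z m := IsPrimitiveRoot.orderOf z
  have hzm : z ^ m = 1 := pow_orderOf_eq_one z
  set G : Polynomial ℚ := 13*X^20 + 8*X^19 - 6*X^17 - 3*X^16 + 3*X^15 + 3*X^14 + 8*X^13
      - 2*X^11 - 3*X^10 - 2*X^9 + 8*X^7 + 3*X^6 + 3*X^5 - 3*X^4 - 6*X^3 + 8*X + 13 with hGdef
  have hdeg : G.natDegree = 20 := by rw [hGdef]; compute_degree!
  have hGne : G ≠ 0 := by intro h; rw [h] at hdeg; simp at hdeg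
  have hGz : Polynomial.aeval z G = 0 := by
    rw [hGdef]
    simp only [map_add, map_sub, map_mul, map_pow, map_ofNat, Polynomial.aeval_X]
    linear_combination h0
  have hdvd : minpoly ℚ z ∣ G := minpoly.dvd ℚ z hGz
  have h20 : Nat.totient m ≤ 20 := by
    have hle := Polynomial.natDegree_le_of_dvd hdvd hGne
    rwa [← Polynomial.cyclotomic_eq_minpoly_rat hprim hmpos,
      Polynomial.natDegree_cyclotomic, hdeg] at hle
  have hm800 : m ≤ 800 := by
    have := (tot_bound m).1
    nlinarith
  have hm66 : m ≤ 66 := by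
    by_contra hgt
    obtain ⟨d, hdF, hdm⟩ := coverAll m (by omega) hm800
    have h1 : Nat.totient d ∣ Nat.totient m := Nat.totient_dvd_of_dvd hdm
    have h2 : 0 < Nat.totient m := Nat.totient_pos.mpr hmpos
    have h3 := Nat.le_of_dvd h2 h1
    have h4 := badF d hdF
    omega
  have hdisj := small_case m (Finset.mem_Icc.mpr ⟨hmpos, hm66⟩) h20
  rcases hdisj with h|h|h|h|h|h|h|h|h|h|h|h|h|h
  · exact cert26 z h0 (pow_dvd_one z m 26 hzm h)
  · exact cert28 z h0 (pow_dvd_one z m 28 hzm h)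
  · exact cert32 z h0 (pow_dvd_one z m 32 hzm h)
  · exact cert34 z h0 (pow_dvd_one z m 34 hzm h)
  · exact cert36 z h0 (pow_dvd_one z m 36 hzm h)
  · exact cert38 z h0 (pow_dvd_one z m 38 hzm h)
  · exact cert40 z h0 (pow_dvd_one z m 40 hzm h)
  · exact cert42 z h0 (pow_dvd_one z m 42 hzm h)
  · exact cert44 z h0 (pow_dvd_one z m 44 hzm h)
  · exact cert48 z h0 (pow_dvd_one z m 48 hzm h)
  · exact cert50 z h0 (pow_dvd_one z m 50 hzm h)
  · exact cert54 z h0 (pow_dvd_one z m 54 hzm h)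
  · exact cert60 z h0 (pow_dvd_one z m 60 hzm h)
  · exact cert66 z h0 (pow_dvd_one z m 66 hzm h)

/-- The polynomial `F₁₃(t) = (1/13)(t-1)²·g(t)` (with `g` the explicit degree-20
factor) has exactly 2 roots, counted with multiplicity, that are roots of unity,
namely `t = 1` with multiplicity 2. -/
theorem stmt_12
    (g : Polynomial ℂ)
    (hg : g = 13*X^20 + 8*X^19 - 6*X^17 - 3*X^16 + 3*X^15 + 3*X^14 + 8*X^13
        - 2*X^11 - 3*X^10 - 2*X^9 + 8*X^7 + 3*X^6 + 3*X^5 - 3*X^4 - 6*X^3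
        + 8*X + 13)
    (F : Polynomial ℂ) (hF : F = C (1/13) * (X - 1)^2 * g) :
    Multiset.card (F.roots.filter (fun z => ∃ n : ℕ, 0 < n ∧ z ^ n = 1)) = 2 ∧
    F.rootMultiplicity 1 = 2 := by
  have hgeval : ∀ z : ℂ, Polynomial.eval z g = 13*z^20 + 8*z^19 - 6*z^17 - 3*z^16 + 3*z^15 + 3*z^14 + 8*z^13 - 2*z^11 - 3*z^10 - 2*z^9 + 8*z^7 + 3*z^6 + 3*z^5 - 3*z^4 - 6*z^3 + 8*z + 13 := by
    intro z
    rw [hg]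
    simp
  have hg1 : Polynomial.eval 1 g = 45 := by rw [hgeval]; norm_num
  have hgne : g ≠ 0 := by
    intro h
    rw [h] at hg1
    simp at hg1
  have hX1 : ((X : Polynomial ℂ) - 1) = X - C 1 := by rw [Polynomial.C_1]
  have hX1ne : ((X : Polynomial ℂ) - 1) ^ 2 ≠ 0 := by
    rw [hX1]
    exact pow_ne_zero _ (Polynomial.X_sub_C_ne_zero 1)
  have hCne : (C (1/13 : ℂ)) ≠ 0 := by
    simp
  have hroots : F.roots = ((X - 1) ^ 2 : Polynomial ℂ).roots + g.roots := by
    rw [hF, mul_assoc, Polynomial.roots_C_mul _ (by norm_num : (1/13 : ℂ) ≠ 0),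
      Polynomial.roots_mul (mul_ne_zero hX1ne hgne)]
  have hroots2 : ((X - 1) ^ 2 : Polynomial ℂ).roots = {1, 1} := by
    rw [hX1, Polynomial.roots_pow, Polynomial.roots_X_sub_C]
    rfl
  constructor
  · rw [hroots, hroots2, Multiset.filter_add]
    have hfilt1 : Multiset.filter (fun z => ∃ n : ℕ, 0 < n ∧ z ^ n = 1) ({1, 1} : Multiset ℂ)
        = {1, 1} := by
      rw [Multiset.filter_eq_self]
      intro a ha
      simp only [Multiset.insert_eq_cons, Multiset.mem_cons, Multiset.mem_singleton] at ha
      rcases ha with rfl | rfl <;> exact ⟨1, one_pos, one_pow 1⟩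
    have hfilt2 : Multiset.filter (fun z => ∃ n : ℕ, 0 < n ∧ z ^ n = 1) g.roots = 0 := by
      rw [Multiset.filter_eq_nil]
      rintro z hz ⟨n, hn, hzn⟩
      have hz0 : Polynomial.eval z g = 0 := (Polynomial.mem_roots hgne).1 hz
      rw [hgeval] at hz0
      exact g_no_ru z hz0 n hn hzn
    rw [hfilt1, hfilt2]
    rfl
  · rw [hF]
    have hne1 : (C (1/13 : ℂ)) * (X - 1) ^ 2 ≠ 0 := mul_ne_zero hCne hX1ne
    rw [Polynomial.rootMultiplicity_mul (mul_ne_zero hne1 hgne),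
      Polynomial.rootMultiplicity_mul hne1]
    have e1 : Polynomial.rootMultiplicity 1 (C (1/13 : ℂ)) = 0 :=
      Polynomial.rootMultiplicity_C _ _
    have e2 : Polynomial.rootMultiplicity 1 (((X : Polynomial ℂ) - 1) ^ 2) = 2 := by
      rw [hX1]
      exact Polynomial.rootMultiplicity_X_sub_C_pow 1 2
    have e3 : Polynomial.rootMultiplicity 1 g = 0 := by
      apply Polynomial.rootMultiplicity_eq_zero
      intro h
      rw [Polynomial.IsRoot, hg1] at h
      norm_num at h
    rw [e1, e2, e3]
end

section
/- The surface in weighted projective space P(1,1,1,3) over F_2 with coordinates x,y,z,w (weights 1,1,1,3) defined by w^2 + (x^2 y + x^2 z + x y^2 + y^3 + y z^2 + z^3) w + x^6 + x^5 y + x^4 y^2 + x^4 y z + x^3 y z^2 + x^3 z^3 + x y z^4 + y^6 + y^4 z^2 + y^3 z^3 + y^2 z^4 + y z^5 + z^6 = 0 is smooth: the defining polynomial and its four partial derivatives have no common nontrivial zero over an algebraic closure of F_2. -/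
set_option maxHeartbeats 4000000


open MvPolynomial

/-- The surface in weighted projective space `P(1,1,1,3)` over `𝔽₂` defined by
`w² + (x²y + x²z + xy² + y³ + yz² + z³)w + (sextic) = 0` is smooth: the defining
polynomial and its four partial derivatives have no common nontrivial zero over
an algebraic closure of `𝔽₂`.  Variables: `X 0 = x`, `X 1 = y`, `X 2 = z`,
`X 3 = w`. -/
theorem stmt_14
    (F : MvPolynomial (Fin 4) (ZMod 2))
    (hF : F = X 3 ^ 2
        + (X 0 ^ 2 * X 1 + X 0 ^ 2 * X 2 + X 0 * X 1 ^ 2 + X 1 ^ 3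
            + X 1 * X 2 ^ 2 + X 2 ^ 3) * X 3
        + X 0 ^ 6 + X 0 ^ 5 * X 1 + X 0 ^ 4 * X 1 ^ 2 + X 0 ^ 4 * X 1 * X 2
        + X 0 ^ 3 * X 1 * X 2 ^ 2 + X 0 ^ 3 * X 2 ^ 3 + X 0 * X 1 * X 2 ^ 4
        + X 1 ^ 6 + X 1 ^ 4 * X 2 ^ 2 + X 1 ^ 3 * X 2 ^ 3 + X 1 ^ 2 * X 2 ^ 4
        + X 1 * X 2 ^ 5 + X 2 ^ 6) :
    ∀ p : Fin 4 → AlgebraicClosure (ZMod 2), p ≠ 0 →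
      ¬ (aeval p F = 0 ∧ ∀ i : Fin 4, aeval p (pderiv i F) = 0) := by
  intro p hp h
  obtain ⟨h0, hD⟩ := h
  have h2 : (2 : AlgebraicClosure (ZMod 2)) = 0 := by
    rw [← map_ofNat (algebraMap (ZMod 2) (AlgebraicClosure (ZMod 2))) 2,
      show (2:ZMod 2) = 0 from rfl, map_zero]
  have pd01 : (pderiv (0:Fin 4)) (X (1:Fin 4) : MvPolynomial (Fin 4) (ZMod 2)) = 0 := pderiv_X_of_ne (by decide)
  have pd02 : (pderiv (0:Fin 4)) (X (2:Fin 4) : MvPolynomial (Fin 4) (ZMod 2)) = 0 := pderiv_X_of_ne (by decide)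
  have pd03 : (pderiv (0:Fin 4)) (X (3:Fin 4) : MvPolynomial (Fin 4) (ZMod 2)) = 0 := pderiv_X_of_ne (by decide)
  have pd10 : (pderiv (1:Fin 4)) (X (0:Fin 4) : MvPolynomial (Fin 4) (ZMod 2)) = 0 := pderiv_X_of_ne (by decide)
  have pd12 : (pderiv (1:Fin 4)) (X (2:Fin 4) : MvPolynomial (Fin 4) (ZMod 2)) = 0 := pderiv_X_of_ne (by decide)
  have pd13 : (pderiv (1:Fin 4)) (X (3:Fin 4) : MvPolynomial (Fin 4) (ZMod 2)) = 0 := pderiv_X_of_ne (by decide)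
  have pd20 : (pderiv (2:Fin 4)) (X (0:Fin 4) : MvPolynomial (Fin 4) (ZMod 2)) = 0 := pderiv_X_of_ne (by decide)
  have pd21 : (pderiv (2:Fin 4)) (X (1:Fin 4) : MvPolynomial (Fin 4) (ZMod 2)) = 0 := pderiv_X_of_ne (by decide)
  have pd23 : (pderiv (2:Fin 4)) (X (3:Fin 4) : MvPolynomial (Fin 4) (ZMod 2)) = 0 := pderiv_X_of_ne (by decide)
  have pd30 : (pderiv (3:Fin 4)) (X (0:Fin 4) : MvPolynomial (Fin 4) (ZMod 2)) = 0 := pderiv_X_of_ne (by decide)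
  have pd31 : (pderiv (3:Fin 4)) (X (1:Fin 4) : MvPolynomial (Fin 4) (ZMod 2)) = 0 := pderiv_X_of_ne (by decide)
  have pd32 : (pderiv (3:Fin 4)) (X (2:Fin 4) : MvPolynomial (Fin 4) (ZMod 2)) = 0 := pderiv_X_of_ne (by decide)
  have e0 : p 0 ^ 6 + p 0 ^ 5 * p 1 + p 0 ^ 4 * p 1 ^ 2 + p 0 ^ 4 * p 1 * p 2 + p 0 ^ 3 * p 1 * p 2 ^ 2 + p 0 ^ 3 * p 2 ^ 3 + p 0 ^ 2 * p 1 * p 3 + p 0 ^ 2 * p 2 * p 3 + p 0 * p 1 ^ 2 * p 3 + p 0 * p 1 * p 2 ^ 4 + p 1 ^ 6 + p 1 ^ 4 * p 2 ^ 2 + p 1 ^ 3 * p 2 ^ 3 + p 1 ^ 3 * p 3 + p 1 ^ 2 * p 2 ^ 4 + p 1 * p 2 ^ 5 + p 1 * p 2 ^ 2 * p 3 + p 2 ^ 6 + p 2 ^ 3 * p 3 + p 3 ^ 2 = 0 := by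
    rw [← h0, hF]
    simp only [map_add, map_mul, map_pow, aeval_X]
    ring
  have e1 : 6 * p 0 ^ 5 + 5 * p 0 ^ 4 * p 1 + 4 * p 0 ^ 3 * p 1 ^ 2 + 4 * p 0 ^ 3 * p 1 * p 2 + 3 * p 0 ^ 2 * p 1 * p 2 ^ 2 + 3 * p 0 ^ 2 * p 2 ^ 3 + 2 * p 0 * p 1 * p 3 + 2 * p 0 * p 2 * p 3 + p 1 ^ 2 * p 3 + p 1 * p 2 ^ 4 = 0 := by
    rw [← hD 0, hF]
    simp only [pd01, pd02, pd03, pd10, pd12, pd13, pd20, pd21, pd23, pd30, pd31, pd32, Derivation.leibniz, Derivation.leibniz_pow, pderiv_X_self, smul_eq_mul, map_add, map_mul, map_pow, map_one, map_nsmul, aeval_X, mul_zero, zero_mul, mul_one, one_mul, add_zero, zero_add, smul_zero, map_zero, nsmul_eq_mul, Nat.cast_ofNat, map_ofNat]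
    ring
  have e2 : p 0 ^ 5 + 2 * p 0 ^ 4 * p 1 + p 0 ^ 4 * p 2 + p 0 ^ 3 * p 2 ^ 2 + p 0 ^ 2 * p 3 + 2 * p 0 * p 1 * p 3 + p 0 * p 2 ^ 4 + 6 * p 1 ^ 5 + 4 * p 1 ^ 3 * p 2 ^ 2 + 3 * p 1 ^ 2 * p 2 ^ 3 + 3 * p 1 ^ 2 * p 3 + 2 * p 1 * p 2 ^ 4 + p 2 ^ 5 + p 2 ^ 2 * p 3 = 0 := by
    rw [← hD 1, hF]
    simp only [pd01, pd02, pd03, pd10, pd12, pd13, pd20, pd21, pd23, pd30, pd31, pd32, Derivation.leibniz, Derivation.leibniz_pow, pderiv_X_self, smul_eq_mul, map_add, map_mul, map_pow, map_one, map_nsmul, aeval_X, mul_zero, zero_mul, mul_one, one_mul, add_zero, zero_add, smul_zero, map_zero, nsmul_eq_mul, Nat.cast_ofNat, map_ofNat]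
    ring
  have e3 : p 0 ^ 4 * p 1 + 2 * p 0 ^ 3 * p 1 * p 2 + 3 * p 0 ^ 3 * p 2 ^ 2 + p 0 ^ 2 * p 3 + 4 * p 0 * p 1 * p 2 ^ 3 + 2 * p 1 ^ 4 * p 2 + 3 * p 1 ^ 3 * p 2 ^ 2 + 4 * p 1 ^ 2 * p 2 ^ 3 + 5 * p 1 * p 2 ^ 4 + 2 * p 1 * p 2 * p 3 + 6 * p 2 ^ 5 + 3 * p 2 ^ 2 * p 3 = 0 := by
    rw [← hD 2, hF]
    simp only [pd01, pd02, pd03, pd10, pd12, pd13, pd20, pd21, pd23, pd30, pd31, pd32, Derivation.leibniz, Derivation.leibniz_pow, pderiv_X_self, smul_eq_mul, map_add, map_mul, map_pow, map_one, map_nsmul, aeval_X, mul_zero, zero_mul, mul_one, one_mul, add_zero, zero_add, smul_zero, map_zero, nsmul_eq_mul, Nat.cast_ofNat, map_ofNat]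
    ring
  have e4 : p 0 ^ 2 * p 1 + p 0 ^ 2 * p 2 + p 0 * p 1 ^ 2 + p 1 ^ 3 + p 1 * p 2 ^ 2 + p 2 ^ 3 + 2 * p 3 = 0 := by
    rw [← hD 3, hF]
    simp only [pd01, pd02, pd03, pd10, pd12, pd13, pd20, pd21, pd23, pd30, pd31, pd32, Derivation.leibniz, Derivation.leibniz_pow, pderiv_X_self, smul_eq_mul, map_add, map_mul, map_pow, map_one, map_nsmul, aeval_X, mul_zero, zero_mul, mul_one, one_mul, add_zero, zero_add, smul_zero, map_zero, nsmul_eq_mul, Nat.cast_ofNat, map_ofNat]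
    ring
  have hx : p 0 ^ 12 = 0 := by
    linear_combination (p 0 ^ 5 * p 1 + p 0 ^ 5 * p 2 + p 0 ^ 4 * p 1 * p 2 + p 0 ^ 4 * p 2 ^ 2 + p 0 ^ 2 * p 2 ^ 4 + p 0 * p 1 * p 2 ^ 4 + p 0 * p 2 ^ 5 + p 1 ^ 4 * p 2 ^ 2 + p 1 * p 2 ^ 5) * e0 + (p 0 ^ 7 + p 0 ^ 6 * p 1 + p 0 ^ 5 * p 2 ^ 2 + p 0 ^ 4 * p 1 ^ 3 + p 0 ^ 4 * p 1 * p 2 ^ 2 + p 0 ^ 3 * p 1 ^ 4 + p 0 ^ 3 * p 1 * p 3 + p 0 ^ 3 * p 2 ^ 4 + p 0 ^ 3 * p 2 * p 3 + p 0 ^ 2 * p 1 ^ 5 + p 0 ^ 2 * p 1 ^ 2 * p 2 ^ 3 + p 0 ^ 2 * p 1 * p 2 ^ 4 + p 0 ^ 2 * p 1 * p 2 * p 3 + p 0 ^ 2 * p 2 ^ 2 * p 3 + p 0 * p 1 ^ 3 * p 2 ^ 3 + p 0 * p 1 ^ 2 * p 2 ^ 4 + p 0 * p 1 * p 2 ^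 5 + p 0 * p 2 ^ 6 + p 1 ^ 7 + p 1 ^ 4 * p 2 ^ 3 + p 1 ^ 3 * p 2 ^ 4 + p 1 ^ 2 * p 2 ^ 5 + p 1 ^ 2 * p 2 ^ 2 * p 3 + p 1 * p 2 ^ 6 + p 1 * p 2 ^ 3 * p 3 + p 2 ^ 7 + p 2 ^ 4 * p 3) * e1 + (p 0 ^ 7 + p 0 ^ 6 * p 1 + p 0 ^ 5 * p 2 ^ 2 + p 0 ^ 4 * p 1 ^ 3 + p 0 ^ 4 * p 1 * p 2 ^ 2 + p 0 ^ 4 * p 2 ^ 3 + p 0 ^ 3 * p 1 ^ 4 + p 0 ^ 3 * p 1 ^ 3 * p 2 + p 0 ^ 3 * p 1 * p 2 ^ 3 + p 0 ^ 3 * p 1 * p 3 + p 0 ^ 3 * p 2 ^ 4 + p 0 ^ 3 * p 2 * p 3 + p 0 ^ 2 * p 1 ^ 5 + p 0 ^ 2 * p 1 ^ 3 * p 2 ^ 2 + p 0 ^ 2 * p 1 * p 2 * p 3 + p 0 ^ 2 * p 2 ^ 5 + p 0 ^ 2 * p 2 ^ 2 * p 3 + p 0 * p 1 ^ 4 * p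 2 ^ 2 + p 0 * p 2 ^ 6 + p 1 ^ 7 + p 1 ^ 5 * p 2 ^ 2 + p 1 ^ 4 * p 2 ^ 3 + p 1 * p 2 ^ 3 * p 3 + p 2 ^ 4 * p 3) * e2 + (p 0 ^ 7 + p 0 ^ 6 * p 2 + p 0 ^ 5 * p 1 * p 2 + p 0 ^ 4 * p 1 ^ 2 * p 2 + p 0 ^ 4 * p 1 * p 2 ^ 2 + p 0 ^ 4 * p 2 ^ 3 + p 0 ^ 3 * p 1 ^ 3 * p 2 + p 0 ^ 3 * p 1 * p 2 ^ 3 + p 0 ^ 2 * p 1 ^ 5 + p 0 ^ 2 * p 1 ^ 4 * p 2 + p 0 ^ 2 * p 1 ^ 2 * p 2 ^ 3 + p 0 ^ 2 * p 2 ^ 5 + p 0 * p 1 ^ 5 * p 2 + p 0 * p 1 * p 2 ^ 2 * p 3 + p 0 * p 2 ^ 6 + p 0 * p 2 ^ 3 * p 3 + p 1 ^ 7 + p 1 ^ 5 * p 2 ^ 2 + p 2 ^ 7 + p 2 ^ 4 * p 3) * e3 + (p 0 * p 1 ^ 2 * p 2 ^ 6 + p 1 ^ 6 * p 2 ^ 3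 + p 1 ^ 4 * p 2 ^ 5 + p 1 ^ 2 * p 2 ^ 7 + p 1 * p 2 ^ 8) * e4 + ( - 3 * p 0 ^ 12 - 8 * p 0 ^ 11 * p 1 - p 0 ^ 11 * p 2 - 6 * p 0 ^ 10 * p 1 ^ 2 - 5 * p 0 ^ 10 * p 1 * p 2 - 6 * p 0 ^ 10 * p 2 ^ 2 - 6 * p 0 ^ 9 * p 1 ^ 3 - 4 * p 0 ^ 9 * p 1 ^ 2 * p 2 - 11 * p 0 ^ 9 * p 1 * p 2 ^ 2 - 4 * p 0 ^ 9 * p 2 ^ 3 - p 0 ^ 9 * p 3 - 7 * p 0 ^ 8 * p 1 ^ 4 - 2 * p 0 ^ 8 * p 1 ^ 3 * p 2 - 10 * p 0 ^ 8 * p 1 ^ 2 * p 2 ^ 2 - 11 * p 0 ^ 8 * p 1 * p 2 ^ 3 - 6 * p 0 ^ 8 * p 1 * p 3 - 6 * p 0 ^ 8 * p 2 ^ 4 - 5 * p 0 ^ 8 * p 2 * p 3 - 12 * p 0 ^ 7 * p 1 ^ 5 - 5 * p 0 ^ 7 * p 1 ^ 4 * p 2 - 8 * p 0 ^ 7 *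 p 1 ^ 3 * p 2 ^ 2 - 13 * p 0 ^ 7 * p 1 ^ 2 * p 2 ^ 3 - 8 * p 0 ^ 7 * p 1 ^ 2 * p 3 - 20 * p 0 ^ 7 * p 1 * p 2 ^ 4 - 11 * p 0 ^ 7 * p 1 * p 2 * p 3 - 9 * p 0 ^ 7 * p 2 ^ 5 - 7 * p 0 ^ 7 * p 2 ^ 2 * p 3 - 9 * p 0 ^ 6 * p 1 ^ 6 - 3 * p 0 ^ 6 * p 1 ^ 5 * p 2 - 8 * p 0 ^ 6 * p 1 ^ 4 * p 2 ^ 2 - 13 * p 0 ^ 6 * p 1 ^ 3 * p 2 ^ 3 - 5 * p 0 ^ 6 * p 1 ^ 3 * p 3 - 17 * p 0 ^ 6 * p 1 ^ 2 * p 2 ^ 4 - 9 * p 0 ^ 6 * p 1 ^ 2 * p 2 * p 3 - 15 * p 0 ^ 6 * p 1 * p 2 ^ 5 - 12 * p 0 ^ 6 * p 1 * p 2 ^ 2 * p 3 - 8 * p 0 ^ 6 * p 2 ^ 6 - 5 * p 0 ^ 6 * p 2 ^ 3 * p 3 - 6 * p 0 ^ 5 * p 1 ^ 7 - 4 * p 0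 ^ 5 * p 1 ^ 6 * p 2 - 11 * p 0 ^ 5 * p 1 ^ 5 * p 2 ^ 2 - 14 * p 0 ^ 5 * p 1 ^ 4 * p 2 ^ 3 - 3 * p 0 ^ 5 * p 1 ^ 4 * p 3 - 19 * p 0 ^ 5 * p 1 ^ 3 * p 2 ^ 4 - 5 * p 0 ^ 5 * p 1 ^ 3 * p 2 * p 3 - 18 * p 0 ^ 5 * p 1 ^ 2 * p 2 ^ 5 - 15 * p 0 ^ 5 * p 1 ^ 2 * p 2 ^ 2 * p 3 - 19 * p 0 ^ 5 * p 1 * p 2 ^ 6 - 15 * p 0 ^ 5 * p 1 * p 2 ^ 3 * p 3 - p 0 ^ 5 * p 1 * p 3 ^ 2 - 9 * p 0 ^ 5 * p 2 ^ 7 - 7 * p 0 ^ 5 * p 2 ^ 4 * p 3 - p 0 ^ 5 * p 2 * p 3 ^ 2 - 7 * p 0 ^ 4 * p 1 ^ 8 - p 0 ^ 4 * p 1 ^ 7 * p 2 - 11 * p 0 ^ 4 * p 1 ^ 6 * p 2 ^ 2 - 17 * p 0 ^ 4 * p 1 ^ 5 * p 2 ^ 3 - 5 * p 0 ^ 4 *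 p 1 ^ 5 * p 3 - 19 * p 0 ^ 4 * p 1 ^ 4 * p 2 ^ 4 - 3 * p 0 ^ 4 * p 1 ^ 4 * p 2 * p 3 - 20 * p 0 ^ 4 * p 1 ^ 3 * p 2 ^ 5 - 7 * p 0 ^ 4 * p 1 ^ 3 * p 2 ^ 2 * p 3 - 24 * p 0 ^ 4 * p 1 ^ 2 * p 2 ^ 6 - 12 * p 0 ^ 4 * p 1 ^ 2 * p 2 ^ 3 * p 3 - 2 * p 0 ^ 4 * p 1 ^ 2 * p 3 ^ 2 - 17 * p 0 ^ 4 * p 1 * p 2 ^ 7 - 17 * p 0 ^ 4 * p 1 * p 2 ^ 4 * p 3 - 4 * p 0 ^ 4 * p 1 * p 2 * p 3 ^ 2 - 7 * p 0 ^ 4 * p 2 ^ 8 - 9 * p 0 ^ 4 * p 2 ^ 5 * p 3 - 2 * p 0 ^ 4 * p 2 ^ 2 * p 3 ^ 2 - 5 * p 0 ^ 3 * p 1 ^ 9 - 6 * p 0 ^ 3 * p 1 ^ 8 * p 2 - 5 * p 0 ^ 3 * p 1 ^ 7 * p 2 ^ 2 - 13 * p 0 ^ 3 * p 1 ^ 6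 * p 2 ^ 3 - 7 * p 0 ^ 3 * p 1 ^ 6 * p 3 - 18 * p 0 ^ 3 * p 1 ^ 5 * p 2 ^ 4 - 6 * p 0 ^ 3 * p 1 ^ 5 * p 2 * p 3 - 14 * p 0 ^ 3 * p 1 ^ 4 * p 2 ^ 5 - 7 * p 0 ^ 3 * p 1 ^ 4 * p 2 ^ 2 * p 3 - 19 * p 0 ^ 3 * p 1 ^ 3 * p 2 ^ 6 - 12 * p 0 ^ 3 * p 1 ^ 3 * p 2 ^ 3 * p 3 - 2 * p 0 ^ 3 * p 1 ^ 3 * p 3 ^ 2 - 13 * p 0 ^ 3 * p 1 ^ 2 * p 2 ^ 7 - 13 * p 0 ^ 3 * p 1 ^ 2 * p 2 ^ 4 * p 3 - 4 * p 0 ^ 3 * p 1 ^ 2 * p 2 * p 3 ^ 2 - 14 * p 0 ^ 3 * p 1 * p 2 ^ 8 - 11 * p 0 ^ 3 * p 1 * p 2 ^ 5 * p 3 - 4 * p 0 ^ 3 * p 1 * p 2 ^ 2 * p 3 ^ 2 - 4 * p 0 ^ 3 * p 2 ^ 9 - 5 * p 0 ^ 3 * p 2 ^ 6 * p 3 - 2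 * p 0 ^ 3 * p 2 ^ 3 * p 3 ^ 2 - 3 * p 0 ^ 2 * p 1 ^ 10 - p 0 ^ 2 * p 1 ^ 9 * p 2 - 9 * p 0 ^ 2 * p 1 ^ 8 * p 2 ^ 2 - 7 * p 0 ^ 2 * p 1 ^ 7 * p 2 ^ 3 - 3 * p 0 ^ 2 * p 1 ^ 7 * p 3 - 12 * p 0 ^ 2 * p 1 ^ 6 * p 2 ^ 4 - 4 * p 0 ^ 2 * p 1 ^ 6 * p 2 * p 3 - 14 * p 0 ^ 2 * p 1 ^ 5 * p 2 ^ 5 - 10 * p 0 ^ 2 * p 1 ^ 5 * p 2 ^ 2 * p 3 - 12 * p 0 ^ 2 * p 1 ^ 4 * p 2 ^ 6 - 6 * p 0 ^ 2 * p 1 ^ 4 * p 2 ^ 3 * p 3 - 11 * p 0 ^ 2 * p 1 ^ 3 * p 2 ^ 7 - 10 * p 0 ^ 2 * p 1 ^ 3 * p 2 ^ 4 * p 3 - 2 * p 0 ^ 2 * p 1 ^ 3 * p 2 * p 3 ^ 2 - 12 * p 0 ^ 2 * p 1 ^ 2 * p 2 ^ 8 - 14 * p 0 ^ 2 * p 1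 ^ 2 * p 2 ^ 5 * p 3 - 2 * p 0 ^ 2 * p 1 ^ 2 * p 2 ^ 2 * p 3 ^ 2 - 10 * p 0 ^ 2 * p 1 * p 2 ^ 9 - 12 * p 0 ^ 2 * p 1 * p 2 ^ 6 * p 3 - p 0 ^ 2 * p 1 * p 2 ^ 3 * p 3 ^ 2 - 6 * p 0 ^ 2 * p 2 ^ 10 - 6 * p 0 ^ 2 * p 2 ^ 7 * p 3 - 2 * p 0 ^ 2 * p 2 ^ 4 * p 3 ^ 2 - 4 * p 0 * p 1 ^ 9 * p 2 ^ 2 - 4 * p 0 * p 1 ^ 8 * p 2 ^ 3 - 2 * p 0 * p 1 ^ 8 * p 3 - 5 * p 0 * p 1 ^ 7 * p 2 ^ 4 - p 0 * p 1 ^ 7 * p 2 * p 3 - 7 * p 0 * p 1 ^ 6 * p 2 ^ 5 - 4 * p 0 * p 1 ^ 6 * p 2 ^ 2 * p 3 - 9 * p 0 * p 1 ^ 5 * p 2 ^ 6 - 5 * p 0 * p 1 ^ 5 * p 2 ^ 3 * p 3 - 4 * p 0 * p 1 ^ 4 * p 2 ^ 7 - 6 * p 0 * p 1 ^ 4 *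 p 2 ^ 4 * p 3 - 6 * p 0 * p 1 ^ 3 * p 2 ^ 8 - 7 * p 0 * p 1 ^ 3 * p 2 ^ 5 * p 3 - p 0 * p 1 ^ 3 * p 2 ^ 2 * p 3 ^ 2 - 6 * p 0 * p 1 ^ 2 * p 2 ^ 9 - 10 * p 0 * p 1 ^ 2 * p 2 ^ 6 * p 3 - 4 * p 0 * p 1 ^ 2 * p 2 ^ 3 * p 3 ^ 2 - 7 * p 0 * p 1 * p 2 ^ 10 - 12 * p 0 * p 1 * p 2 ^ 7 * p 3 - 6 * p 0 * p 1 * p 2 ^ 4 * p 3 ^ 2 - 4 * p 0 * p 2 ^ 11 - 7 * p 0 * p 2 ^ 8 * p 3 - 3 * p 0 * p 2 ^ 5 * p 3 ^ 2 - 3 * p 1 ^ 12 - p 1 ^ 11 * p 2 - 7 * p 1 ^ 10 * p 2 ^ 2 - 8 * p 1 ^ 9 * p 2 ^ 3 - 2 * p 1 ^ 9 * p 3 - 8 * p 1 ^ 8 * p 2 ^ 4 - p 1 ^ 8 * p 2 * p 3 - 11 * p 1 ^ 7 * p 2 ^ 5 - 4 * p 1 ^ 7 * p 2 ^ 2 *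 p 3 - 6 * p 1 ^ 6 * p 2 ^ 6 - 7 * p 1 ^ 6 * p 2 ^ 3 * p 3 - 7 * p 1 ^ 5 * p 2 ^ 7 - 6 * p 1 ^ 5 * p 2 ^ 4 * p 3 - 4 * p 1 ^ 4 * p 2 ^ 8 - 6 * p 1 ^ 4 * p 2 ^ 5 * p 3 - p 1 ^ 4 * p 2 ^ 2 * p 3 ^ 2 - 3 * p 1 ^ 3 * p 2 ^ 9 - 6 * p 1 ^ 3 * p 2 ^ 6 * p 3 - 2 * p 1 ^ 3 * p 2 ^ 3 * p 3 ^ 2 - 4 * p 1 ^ 2 * p 2 ^ 10 - 7 * p 1 ^ 2 * p 2 ^ 7 * p 3 - 2 * p 1 ^ 2 * p 2 ^ 4 * p 3 ^ 2 - 4 * p 1 * p 2 ^ 11 - 7 * p 1 * p 2 ^ 8 * p 3 - 2 * p 1 * p 2 ^ 5 * p 3 ^ 2 - 3 * p 2 ^ 12 - 5 * p 2 ^ 9 * p 3 - 2 * p 2 ^ 6 * p 3 ^ 2) * h2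
  have hx0 : p 0 = 0 := pow_eq_zero_iff (by norm_num) |>.mp hx
  have hy : p 1 ^ 12 = 0 := by
    linear_combination (p 0 ^ 5 * p 1 + p 0 ^ 5 * p 2 + p 0 ^ 4 * p 1 * p 2 + p 0 ^ 4 * p 2 ^ 2 + p 0 ^ 3 * p 1 * p 2 ^ 2 + p 0 ^ 3 * p 2 ^ 3 + p 0 * p 1 ^ 2 * p 2 ^ 3 + p 1 ^ 6 + p 1 ^ 3 * p 2 ^ 3 + p 1 * p 2 ^ 5 + p 2 ^ 6) * e0 + (p 0 ^ 6 * p 2 + p 0 ^ 4 * p 1 ^ 3 + p 0 ^ 4 * p 1 * p 2 ^ 2 + p 0 ^ 3 * p 1 ^ 4 + p 0 ^ 3 * p 1 ^ 2 * p 2 ^ 2 + p 0 ^ 3 * p 1 * p 3 + p 0 ^ 3 * p 2 * p 3 + p 0 ^ 2 * p 1 ^ 5 + p 0 ^ 2 * p 1 ^ 3 * p 2 ^ 2 + p 0 ^ 2 * p 1 ^ 2 * p 2 ^ 3 + p 0 ^ 2 * p 1 * p 2 * p 3 + p 0 ^ 2 * p 2 ^ 5 + p 0 ^ 2 * p 2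 ^ 2 * p 3 + p 0 * p 1 ^ 6 + p 0 * p 1 ^ 4 * p 2 ^ 2 + p 0 * p 1 ^ 3 * p 2 ^ 3 + p 0 * p 1 ^ 2 * p 2 ^ 4 + p 0 * p 1 * p 2 ^ 5 + p 0 * p 1 * p 2 ^ 2 * p 3 + p 0 * p 2 ^ 6 + p 0 * p 2 ^ 3 * p 3 + p 1 ^ 4 * p 3 + p 1 ^ 3 * p 2 ^ 4 + p 1 * p 2 ^ 3 * p 3) * e1 + (p 0 ^ 6 * p 1 + p 0 ^ 6 * p 2 + p 0 ^ 5 * p 1 ^ 2 + p 0 ^ 4 * p 1 ^ 2 * p 2 + p 0 ^ 4 * p 1 * p 2 ^ 2 + p 0 ^ 3 * p 1 ^ 4 + p 0 ^ 3 * p 1 ^ 3 * p 2 + p 0 ^ 3 * p 1 * p 2 ^ 3 + p 0 ^ 3 * p 1 * p 3 + p 0 ^ 3 * p 2 ^ 4 + p 0 ^ 3 * p 2 * p 3 + p 0 ^ 2 * p 1 ^ 3 * p 2 ^ 2 + p 0 ^ 2 * p 1 * p 2 * p 3 + p 0 ^ 2 * p 2 ^ 5 + p 0 ^ 2 * p 2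 ^ 2 * p 3 + p 0 * p 1 ^ 4 * p 2 ^ 2 + p 0 * p 1 * p 2 ^ 2 * p 3 + p 0 * p 2 ^ 6 + p 1 ^ 7 + p 1 ^ 5 * p 2 ^ 2 + p 1 ^ 4 * p 2 ^ 3 + p 1 ^ 3 * p 2 ^ 4 + p 1 ^ 2 * p 2 ^ 5 + p 1 * p 2 ^ 6 + p 2 ^ 7) * e2 + (p 0 ^ 5 * p 1 ^ 2 + p 0 ^ 5 * p 1 * p 2 + p 0 ^ 5 * p 2 ^ 2 + p 0 ^ 3 * p 1 ^ 4 + p 0 ^ 3 * p 1 ^ 3 * p 2 + p 0 ^ 3 * p 1 * p 2 ^ 3 + p 0 ^ 2 * p 1 ^ 3 * p 2 ^ 2 + p 0 ^ 2 * p 1 * p 2 ^ 4 + p 0 * p 1 ^ 5 * p 2 + p 0 * p 1 ^ 4 * p 2 ^ 2 + p 0 * p 1 * p 2 ^ 2 * p 3 + p 0 * p 2 ^ 6 + p 1 ^ 7 + p 1 ^ 6 * p 2 + p 1 ^ 4 * p 2 ^ 3 + p 1 ^ 3 * p 2 ^ 4 + p 1 ^ 2 * p 2 ^ 5 + p 1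 * p 2 ^ 3 * p 3 + p 2 ^ 4 * p 3) * e3 + (p 0 * p 1 ^ 2 * p 2 ^ 6 + p 1 ^ 4 * p 2 ^ 5 + p 1 ^ 3 * p 2 ^ 6 + p 1 ^ 2 * p 2 ^ 7 + p 1 * p 2 ^ 8) * e4 + ( - p 0 ^ 11 * p 1 - 4 * p 0 ^ 11 * p 2 - 2 * p 0 ^ 10 * p 1 ^ 2 - 5 * p 0 ^ 10 * p 1 * p 2 - p 0 ^ 10 * p 2 ^ 2 - 5 * p 0 ^ 9 * p 1 ^ 3 - 5 * p 0 ^ 9 * p 1 ^ 2 * p 2 - 8 * p 0 ^ 9 * p 1 * p 2 ^ 2 - p 0 ^ 9 * p 2 ^ 3 - 6 * p 0 ^ 8 * p 1 ^ 4 - 3 * p 0 ^ 8 * p 1 ^ 3 * p 2 - 12 * p 0 ^ 8 * p 1 ^ 2 * p 2 ^ 2 - 7 * p 0 ^ 8 * p 1 * p 2 ^ 3 - 4 * p 0 ^ 8 * p 1 * p 3 - 4 * p 0 ^ 8 * p 2 ^ 4 - 4 * p 0 ^ 8 * p 2 * p 3 - 9 * p 0 ^ 7 * p 1 ^ 5 -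 4 * p 0 ^ 7 * p 1 ^ 4 * p 2 - 9 * p 0 ^ 7 * p 1 ^ 3 * p 2 ^ 2 - 9 * p 0 ^ 7 * p 1 ^ 2 * p 2 ^ 3 - 6 * p 0 ^ 7 * p 1 ^ 2 * p 3 - 4 * p 0 ^ 7 * p 1 * p 2 ^ 4 - 11 * p 0 ^ 7 * p 1 * p 2 * p 3 - 5 * p 0 ^ 7 * p 2 ^ 5 - 6 * p 0 ^ 7 * p 2 ^ 2 * p 3 - 11 * p 0 ^ 6 * p 1 ^ 6 - 6 * p 0 ^ 6 * p 1 ^ 5 * p 2 - 16 * p 0 ^ 6 * p 1 ^ 4 * p 2 ^ 2 - 18 * p 0 ^ 6 * p 1 ^ 3 * p 2 ^ 3 - 5 * p 0 ^ 6 * p 1 ^ 3 * p 3 - 12 * p 0 ^ 6 * p 1 ^ 2 * p 2 ^ 4 - 11 * p 0 ^ 6 * p 1 ^ 2 * p 2 * p 3 - 16 * p 0 ^ 6 * p 1 * p 2 ^ 5 - 12 * p 0 ^ 6 * p 1 * p 2 ^ 2 * p 3 - 6 * p 0 ^ 6 * p 2 ^ 6 - 5 * p 0 ^ 6 * p 2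 ^ 3 * p 3 - 9 * p 0 ^ 5 * p 1 ^ 7 - 4 * p 0 ^ 5 * p 1 ^ 6 * p 2 - 13 * p 0 ^ 5 * p 1 ^ 5 * p 2 ^ 2 - 18 * p 0 ^ 5 * p 1 ^ 4 * p 2 ^ 3 - 7 * p 0 ^ 5 * p 1 ^ 4 * p 3 - 20 * p 0 ^ 5 * p 1 ^ 3 * p 2 ^ 4 - 7 * p 0 ^ 5 * p 1 ^ 3 * p 2 * p 3 - 18 * p 0 ^ 5 * p 1 ^ 2 * p 2 ^ 5 - 16 * p 0 ^ 5 * p 1 ^ 2 * p 2 ^ 2 * p 3 - 16 * p 0 ^ 5 * p 1 * p 2 ^ 6 - 18 * p 0 ^ 5 * p 1 * p 2 ^ 3 * p 3 - p 0 ^ 5 * p 1 * p 3 ^ 2 - 5 * p 0 ^ 5 * p 2 ^ 7 - 5 * p 0 ^ 5 * p 2 ^ 4 * p 3 - p 0 ^ 5 * p 2 * p 3 ^ 2 - 4 * p 0 ^ 4 * p 1 ^ 8 - 7 * p 0 ^ 4 * p 1 ^ 7 * p 2 - 9 * p 0 ^ 4 * p 1 ^ 6 * p 2 ^ 2 - 15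 * p 0 ^ 4 * p 1 ^ 5 * p 2 ^ 3 - 5 * p 0 ^ 4 * p 1 ^ 5 * p 3 - 20 * p 0 ^ 4 * p 1 ^ 4 * p 2 ^ 4 - 4 * p 0 ^ 4 * p 1 ^ 4 * p 2 * p 3 - 14 * p 0 ^ 4 * p 1 ^ 3 * p 2 ^ 5 - 7 * p 0 ^ 4 * p 1 ^ 3 * p 2 ^ 2 * p 3 - 14 * p 0 ^ 4 * p 1 ^ 2 * p 2 ^ 6 - 13 * p 0 ^ 4 * p 1 ^ 2 * p 2 ^ 3 * p 3 - 2 * p 0 ^ 4 * p 1 ^ 2 * p 3 ^ 2 - 9 * p 0 ^ 4 * p 1 * p 2 ^ 7 - 11 * p 0 ^ 4 * p 1 * p 2 ^ 4 * p 3 - 4 * p 0 ^ 4 * p 1 * p 2 * p 3 ^ 2 - 5 * p 0 ^ 4 * p 2 ^ 8 - 3 * p 0 ^ 4 * p 2 ^ 5 * p 3 - 2 * p 0 ^ 4 * p 2 ^ 2 * p 3 ^ 2 - 3 * p 0 ^ 3 * p 1 ^ 9 - 5 * p 0 ^ 3 * p 1 ^ 8 * p 2 - 10 * p 0 ^ 3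 * p 1 ^ 7 * p 2 ^ 2 - 14 * p 0 ^ 3 * p 1 ^ 6 * p 2 ^ 3 - 8 * p 0 ^ 3 * p 1 ^ 6 * p 3 - 17 * p 0 ^ 3 * p 1 ^ 5 * p 2 ^ 4 - 9 * p 0 ^ 3 * p 1 ^ 5 * p 2 * p 3 - 22 * p 0 ^ 3 * p 1 ^ 4 * p 2 ^ 5 - 9 * p 0 ^ 3 * p 1 ^ 4 * p 2 ^ 2 * p 3 - 18 * p 0 ^ 3 * p 1 ^ 3 * p 2 ^ 6 - 12 * p 0 ^ 3 * p 1 ^ 3 * p 2 ^ 3 * p 3 - 2 * p 0 ^ 3 * p 1 ^ 3 * p 3 ^ 2 - 14 * p 0 ^ 3 * p 1 ^ 2 * p 2 ^ 7 - 12 * p 0 ^ 3 * p 1 ^ 2 * p 2 ^ 4 * p 3 - 4 * p 0 ^ 3 * p 1 ^ 2 * p 2 * p 3 ^ 2 - 10 * p 0 ^ 3 * p 1 * p 2 ^ 8 - 13 * p 0 ^ 3 * p 1 * p 2 ^ 5 * p 3 - 5 * p 0 ^ 3 * p 1 * p 2 ^ 2 * p 3 ^ 2 - 4 * p 0 ^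 3 * p 2 ^ 9 - 7 * p 0 ^ 3 * p 2 ^ 6 * p 3 - 2 * p 0 ^ 3 * p 2 ^ 3 * p 3 ^ 2 - 3 * p 0 ^ 2 * p 1 ^ 8 * p 2 ^ 2 - p 0 ^ 2 * p 1 ^ 7 * p 2 ^ 3 - 3 * p 0 ^ 2 * p 1 ^ 7 * p 3 - 6 * p 0 ^ 2 * p 1 ^ 6 * p 2 ^ 4 - 5 * p 0 ^ 2 * p 1 ^ 6 * p 2 * p 3 - 10 * p 0 ^ 2 * p 1 ^ 5 * p 2 ^ 5 - 9 * p 0 ^ 2 * p 1 ^ 5 * p 2 ^ 2 * p 3 - 9 * p 0 ^ 2 * p 1 ^ 4 * p 2 ^ 6 - 9 * p 0 ^ 2 * p 1 ^ 4 * p 2 ^ 3 * p 3 - 11 * p 0 ^ 2 * p 1 ^ 3 * p 2 ^ 7 - 9 * p 0 ^ 2 * p 1 ^ 3 * p 2 ^ 4 * p 3 - 2 * p 0 ^ 2 * p 1 ^ 3 * p 2 * p 3 ^ 2 - 5 * p 0 ^ 2 * p 1 ^ 2 * p 2 ^ 8 - 13 * p 0 ^ 2 * p 1 ^ 2 * p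 2 ^ 5 * p 3 - 4 * p 0 ^ 2 * p 1 ^ 2 * p 2 ^ 2 * p 3 ^ 2 - 7 * p 0 ^ 2 * p 1 * p 2 ^ 9 - 10 * p 0 ^ 2 * p 1 * p 2 ^ 6 * p 3 - 3 * p 0 ^ 2 * p 1 * p 2 ^ 3 * p 3 ^ 2 - p 0 ^ 2 * p 2 ^ 10 - 3 * p 0 ^ 2 * p 2 ^ 7 * p 3 - 2 * p 0 ^ 2 * p 2 ^ 4 * p 3 ^ 2 - 4 * p 0 * p 1 ^ 9 * p 2 ^ 2 - 5 * p 0 * p 1 ^ 8 * p 2 ^ 3 - 2 * p 0 * p 1 ^ 8 * p 3 - 9 * p 0 * p 1 ^ 7 * p 2 ^ 4 - 7 * p 0 * p 1 ^ 6 * p 2 ^ 5 - 7 * p 0 * p 1 ^ 6 * p 2 ^ 2 * p 3 - 14 * p 0 * p 1 ^ 5 * p 2 ^ 6 - 6 * p 0 * p 1 ^ 5 * p 2 ^ 3 * p 3 - p 0 * p 1 ^ 5 * p 3 ^ 2 - 9 * p 0 * p 1 ^ 4 * p 2 ^ 7 - 8 * p 0 * p 1 ^ 4 * p 2 ^ 4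 * p 3 - p 0 * p 1 ^ 4 * p 2 * p 3 ^ 2 - 8 * p 0 * p 1 ^ 3 * p 2 ^ 8 - 7 * p 0 * p 1 ^ 3 * p 2 ^ 5 * p 3 - 2 * p 0 * p 1 ^ 3 * p 2 ^ 2 * p 3 ^ 2 - 6 * p 0 * p 1 ^ 2 * p 2 ^ 9 - 11 * p 0 * p 1 ^ 2 * p 2 ^ 6 * p 3 - 3 * p 0 * p 1 ^ 2 * p 2 ^ 3 * p 3 ^ 2 - 5 * p 0 * p 1 * p 2 ^ 10 - 8 * p 0 * p 1 * p 2 ^ 7 * p 3 - 3 * p 0 * p 1 * p 2 ^ 4 * p 3 ^ 2 - 4 * p 0 * p 2 ^ 11 - 2 * p 0 * p 2 ^ 8 * p 3 - 3 * p 1 ^ 12 - p 1 ^ 11 * p 2 - 8 * p 1 ^ 10 * p 2 ^ 2 - 9 * p 1 ^ 9 * p 2 ^ 3 - 2 * p 1 ^ 9 * p 3 - 12 * p 1 ^ 8 * p 2 ^ 4 - p 1 ^ 8 * p 2 * p 3 - 17 * p 1 ^ 7 * p 2 ^ 5 - 5 * p 1 ^ 7 * p 2 ^ 2 * p 3 -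 17 * p 1 ^ 6 * p 2 ^ 6 - 4 * p 1 ^ 6 * p 2 ^ 3 * p 3 - p 1 ^ 6 * p 3 ^ 2 - 16 * p 1 ^ 5 * p 2 ^ 7 - 5 * p 1 ^ 5 * p 2 ^ 4 * p 3 - 16 * p 1 ^ 4 * p 2 ^ 8 - 9 * p 1 ^ 4 * p 2 ^ 5 * p 3 - 13 * p 1 ^ 3 * p 2 ^ 9 - 10 * p 1 ^ 3 * p 2 ^ 6 * p 3 - p 1 ^ 3 * p 2 ^ 3 * p 3 ^ 2 - 8 * p 1 ^ 2 * p 2 ^ 10 - 10 * p 1 ^ 2 * p 2 ^ 7 * p 3 - p 1 ^ 2 * p 2 ^ 4 * p 3 ^ 2 - 3 * p 1 * p 2 ^ 11 - 8 * p 1 * p 2 ^ 8 * p 3 - 3 * p 1 * p 2 ^ 5 * p 3 ^ 2 - p 2 ^ 12 - 4 * p 2 ^ 9 * p 3 - 2 * p 2 ^ 6 * p 3 ^ 2) * h2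
  have hy0 : p 1 = 0 := pow_eq_zero_iff (by norm_num) |>.mp hy
  have hz : p 2 ^ 12 = 0 := by
    linear_combination (p 0 ^ 5 * p 1 + p 0 ^ 5 * p 2 + p 0 ^ 4 * p 1 * p 2 + p 0 ^ 3 * p 1 * p 2 ^ 2 + p 0 ^ 3 * p 2 ^ 3 + p 0 ^ 2 * p 1 * p 2 ^ 3 + p 0 ^ 2 * p 2 ^ 4 + p 1 ^ 2 * p 2 ^ 4 + p 2 ^ 6) * e0 + (p 0 ^ 6 * p 1 + p 0 ^ 5 * p 1 ^ 2 + p 0 ^ 5 * p 2 ^ 2 + p 0 ^ 4 * p 1 ^ 3 + p 0 ^ 4 * p 1 * p 2 ^ 2 + p 0 ^ 4 * p 2 ^ 3 + p 0 ^ 3 * p 1 ^ 4 + p 0 ^ 3 * p 1 ^ 2 * p 2 ^ 2 + p 0 ^ 3 * p 1 * p 3 + p 0 ^ 3 * p 2 * p 3 + p 0 ^ 2 * p 1 ^ 5 + p 0 ^ 2 * p 1 * p 2 ^ 4 + p 0 ^ 2 * p 1 * p 2 * p 3 + p 0 ^ 2 * p 2 ^ 5 + p 0 * p 1 ^ 6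 + p 0 * p 1 * p 2 ^ 5 + p 0 * p 1 * p 2 ^ 2 * p 3 + p 0 * p 2 ^ 6 + p 1 ^ 5 * p 2 ^ 2 + p 1 ^ 4 * p 2 ^ 3 + p 1 ^ 2 * p 2 ^ 5 + p 1 * p 2 ^ 3 * p 3 + p 2 ^ 4 * p 3) * e1 + (p 0 ^ 6 * p 1 + p 0 ^ 6 * p 2 + p 0 ^ 5 * p 1 * p 2 + p 0 ^ 5 * p 2 ^ 2 + p 0 ^ 4 * p 1 ^ 2 * p 2 + p 0 ^ 4 * p 2 ^ 3 + p 0 ^ 3 * p 1 ^ 2 * p 2 ^ 2 + p 0 ^ 3 * p 1 * p 3 + p 0 ^ 3 * p 2 ^ 4 + p 0 ^ 3 * p 2 * p 3 + p 0 ^ 2 * p 1 ^ 5 + p 0 ^ 2 * p 1 ^ 4 * p 2 + p 0 ^ 2 * p 1 * p 2 * p 3 + p 0 ^ 2 * p 2 ^ 5 + p 0 * p 1 ^ 6 + p 0 * p 1 ^ 4 * p 2 ^ 2 + p 0 * p 1 ^ 2 * p 2 ^ 4 + p 0 * p 1 * p 2 ^ 2 * p 3 + p 0 * p 2 ^ 6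 + p 1 ^ 5 * p 2 ^ 2 + p 1 ^ 2 * p 2 ^ 5 + p 1 * p 2 ^ 6 + p 1 * p 2 ^ 3 * p 3 + p 2 ^ 7) * e2 + (p 0 ^ 5 * p 2 ^ 2 + p 0 ^ 4 * p 1 ^ 3 + p 0 ^ 4 * p 1 ^ 2 * p 2 + p 0 ^ 4 * p 1 * p 2 ^ 2 + p 0 ^ 4 * p 2 ^ 3 + p 0 ^ 3 * p 1 ^ 3 * p 2 + p 0 ^ 2 * p 1 ^ 4 * p 2 + p 0 ^ 2 * p 1 ^ 3 * p 2 ^ 2 + p 0 ^ 2 * p 1 * p 2 ^ 4 + p 0 ^ 2 * p 2 ^ 5 + p 0 * p 1 * p 2 ^ 2 * p 3 + p 0 * p 2 ^ 6 + p 1 ^ 6 * p 2 + p 1 ^ 4 * p 2 ^ 3 + p 1 ^ 3 * p 2 ^ 4 + p 1 ^ 2 * p 2 ^ 5 + p 1 * p 2 ^ 6 + p 1 * p 2 ^ 3 * p 3 + p 2 ^ 4 * p 3) * e3 + (p 0 * p 1 ^ 2 * p 2 ^ 6 + p 1 ^ 6 * p 2 ^ 3 + p 1 ^ 5 * p 2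 ^ 4 + p 1 * p 2 ^ 8 + p 2 ^ 9) * e4 + ( - 4 * p 0 ^ 11 * p 1 - p 0 ^ 11 * p 2 - 7 * p 0 ^ 10 * p 1 ^ 2 - 3 * p 0 ^ 10 * p 1 * p 2 - 4 * p 0 ^ 10 * p 2 ^ 2 - 8 * p 0 ^ 9 * p 1 ^ 3 - 5 * p 0 ^ 9 * p 1 ^ 2 * p 2 - 9 * p 0 ^ 9 * p 1 * p 2 ^ 2 - 5 * p 0 ^ 9 * p 2 ^ 3 - 8 * p 0 ^ 8 * p 1 ^ 4 - 4 * p 0 ^ 8 * p 1 ^ 3 * p 2 - 12 * p 0 ^ 8 * p 1 ^ 2 * p 2 ^ 2 - 11 * p 0 ^ 8 * p 1 * p 2 ^ 3 - 4 * p 0 ^ 8 * p 1 * p 3 - 4 * p 0 ^ 8 * p 2 ^ 4 - 4 * p 0 ^ 8 * p 2 * p 3 - 8 * p 0 ^ 7 * p 1 ^ 5 - 4 * p 0 ^ 7 * p 1 ^ 4 * p 2 - 10 * p 0 ^ 7 * p 1 ^ 3 * p 2 ^ 2 - 11 * p 0 ^ 7 * p 1 ^ 2 * p 2 ^ 3 -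 6 * p 0 ^ 7 * p 1 ^ 2 * p 3 - 12 * p 0 ^ 7 * p 1 * p 2 ^ 4 - 11 * p 0 ^ 7 * p 1 * p 2 * p 3 - 8 * p 0 ^ 7 * p 2 ^ 5 - 2 * p 0 ^ 7 * p 2 ^ 2 * p 3 - 12 * p 0 ^ 6 * p 1 ^ 6 - 7 * p 0 ^ 6 * p 1 ^ 5 * p 2 - 8 * p 0 ^ 6 * p 1 ^ 4 * p 2 ^ 2 - 9 * p 0 ^ 6 * p 1 ^ 3 * p 2 ^ 3 - 6 * p 0 ^ 6 * p 1 ^ 3 * p 3 - 11 * p 0 ^ 6 * p 1 ^ 2 * p 2 ^ 4 - 13 * p 0 ^ 6 * p 1 ^ 2 * p 2 * p 3 - 16 * p 0 ^ 6 * p 1 * p 2 ^ 5 - 10 * p 0 ^ 6 * p 1 * p 2 ^ 2 * p 3 - 8 * p 0 ^ 6 * p 2 ^ 6 - 3 * p 0 ^ 6 * p 2 ^ 3 * p 3 - 6 * p 0 ^ 5 * p 1 ^ 7 - 6 * p 0 ^ 5 * p 1 ^ 6 * p 2 - 11 * p 0 ^ 5 * p 1 ^ 5 * p 2 ^ 2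 - 14 * p 0 ^ 5 * p 1 ^ 4 * p 2 ^ 3 - 2 * p 0 ^ 5 * p 1 ^ 4 * p 3 - 15 * p 0 ^ 5 * p 1 ^ 3 * p 2 ^ 4 - 7 * p 0 ^ 5 * p 1 ^ 3 * p 2 * p 3 - 22 * p 0 ^ 5 * p 1 ^ 2 * p 2 ^ 5 - 12 * p 0 ^ 5 * p 1 ^ 2 * p 2 ^ 2 * p 3 - 18 * p 0 ^ 5 * p 1 * p 2 ^ 6 - 14 * p 0 ^ 5 * p 1 * p 2 ^ 3 * p 3 - p 0 ^ 5 * p 1 * p 3 ^ 2 - 8 * p 0 ^ 5 * p 2 ^ 7 - 9 * p 0 ^ 5 * p 2 ^ 4 * p 3 - p 0 ^ 5 * p 2 * p 3 ^ 2 - 2 * p 0 ^ 4 * p 1 ^ 8 - 7 * p 0 ^ 4 * p 1 ^ 7 * p 2 - 8 * p 0 ^ 4 * p 1 ^ 6 * p 2 ^ 2 - 15 * p 0 ^ 4 * p 1 ^ 5 * p 2 ^ 3 - 2 * p 0 ^ 4 * p 1 ^ 5 * p 3 - 13 * p 0 ^ 4 * p 1 ^ 4 * p 2 ^ 4 - 5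 * p 0 ^ 4 * p 1 ^ 4 * p 2 * p 3 - 19 * p 0 ^ 4 * p 1 ^ 3 * p 2 ^ 5 - 8 * p 0 ^ 4 * p 1 ^ 3 * p 2 ^ 2 * p 3 - 20 * p 0 ^ 4 * p 1 ^ 2 * p 2 ^ 6 - 16 * p 0 ^ 4 * p 1 ^ 2 * p 2 ^ 3 * p 3 - 2 * p 0 ^ 4 * p 1 ^ 2 * p 3 ^ 2 - 16 * p 0 ^ 4 * p 1 * p 2 ^ 7 - 13 * p 0 ^ 4 * p 1 * p 2 ^ 4 * p 3 - 4 * p 0 ^ 4 * p 1 * p 2 * p 3 ^ 2 - 8 * p 0 ^ 4 * p 2 ^ 8 - 4 * p 0 ^ 4 * p 2 ^ 5 * p 3 - p 0 ^ 4 * p 2 ^ 2 * p 3 ^ 2 - 9 * p 0 ^ 3 * p 1 ^ 7 * p 2 ^ 2 - 9 * p 0 ^ 3 * p 1 ^ 6 * p 2 ^ 3 - 6 * p 0 ^ 3 * p 1 ^ 6 * p 3 - 14 * p 0 ^ 3 * p 1 ^ 5 * p 2 ^ 4 - 5 * p 0 ^ 3 * p 1 ^ 5 * p 2 * p 3 -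 12 * p 0 ^ 3 * p 1 ^ 4 * p 2 ^ 5 - 6 * p 0 ^ 3 * p 1 ^ 4 * p 2 ^ 2 * p 3 - 13 * p 0 ^ 3 * p 1 ^ 3 * p 2 ^ 6 - 8 * p 0 ^ 3 * p 1 ^ 3 * p 2 ^ 3 * p 3 - 2 * p 0 ^ 3 * p 1 ^ 3 * p 3 ^ 2 - 11 * p 0 ^ 3 * p 1 ^ 2 * p 2 ^ 7 - 14 * p 0 ^ 3 * p 1 ^ 2 * p 2 ^ 4 * p 3 - 4 * p 0 ^ 3 * p 1 ^ 2 * p 2 * p 3 ^ 2 - 10 * p 0 ^ 3 * p 1 * p 2 ^ 8 - 13 * p 0 ^ 3 * p 1 * p 2 ^ 5 * p 3 - 3 * p 0 ^ 3 * p 1 * p 2 ^ 2 * p 3 ^ 2 - 4 * p 0 ^ 3 * p 2 ^ 9 - 5 * p 0 ^ 3 * p 2 ^ 6 * p 3 - p 0 ^ 3 * p 2 ^ 3 * p 3 ^ 2 - 3 * p 0 ^ 2 * p 1 ^ 10 - 3 * p 0 ^ 2 * p 1 ^ 9 * p 2 - 3 * p 0 ^ 2 * p 1 ^ 8 * p 2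 ^ 2 - 7 * p 0 ^ 2 * p 1 ^ 7 * p 2 ^ 3 - 4 * p 0 ^ 2 * p 1 ^ 7 * p 3 - 10 * p 0 ^ 2 * p 1 ^ 6 * p 2 ^ 4 - 6 * p 0 ^ 2 * p 1 ^ 6 * p 2 * p 3 - 14 * p 0 ^ 2 * p 1 ^ 5 * p 2 ^ 5 - 3 * p 0 ^ 2 * p 1 ^ 5 * p 2 ^ 2 * p 3 - 12 * p 0 ^ 2 * p 1 ^ 4 * p 2 ^ 6 - 6 * p 0 ^ 2 * p 1 ^ 4 * p 2 ^ 3 * p 3 - 11 * p 0 ^ 2 * p 1 ^ 3 * p 2 ^ 7 - 6 * p 0 ^ 2 * p 1 ^ 3 * p 2 ^ 4 * p 3 - 2 * p 0 ^ 2 * p 1 ^ 3 * p 2 * p 3 ^ 2 - 10 * p 0 ^ 2 * p 1 ^ 2 * p 2 ^ 8 - 11 * p 0 ^ 2 * p 1 ^ 2 * p 2 ^ 5 * p 3 - 2 * p 0 ^ 2 * p 1 ^ 2 * p 2 ^ 2 * p 3 ^ 2 - 11 * p 0 ^ 2 * p 1 * p 2 ^ 9 - 12 * p 0 ^ 2 *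 p 1 * p 2 ^ 6 * p 3 - 3 * p 0 ^ 2 * p 1 * p 2 ^ 3 * p 3 ^ 2 - 5 * p 0 ^ 2 * p 2 ^ 10 - 6 * p 0 ^ 2 * p 2 ^ 7 * p 3 - p 0 ^ 2 * p 2 ^ 4 * p 3 ^ 2 - 3 * p 0 * p 1 ^ 11 - 5 * p 0 * p 1 ^ 9 * p 2 ^ 2 - 2 * p 0 * p 1 ^ 8 * p 2 ^ 3 - 2 * p 0 * p 1 ^ 8 * p 3 - 9 * p 0 * p 1 ^ 7 * p 2 ^ 4 - 2 * p 0 * p 1 ^ 6 * p 2 ^ 5 - 7 * p 0 * p 1 ^ 6 * p 2 ^ 2 * p 3 - 9 * p 0 * p 1 ^ 5 * p 2 ^ 6 - 3 * p 0 * p 1 ^ 5 * p 2 ^ 3 * p 3 - 5 * p 0 * p 1 ^ 4 * p 2 ^ 7 - 7 * p 0 * p 1 ^ 4 * p 2 ^ 4 * p 3 - 8 * p 0 * p 1 ^ 3 * p 2 ^ 8 - 6 * p 0 * p 1 ^ 3 * p 2 ^ 5 * p 3 - 2 * p 0 * p 1 ^ 3 * p 2 ^ 2 * p 3 ^ 2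 - 8 * p 0 * p 1 ^ 2 * p 2 ^ 9 - 12 * p 0 * p 1 ^ 2 * p 2 ^ 6 * p 3 - 3 * p 0 * p 1 ^ 2 * p 2 ^ 3 * p 3 ^ 2 - 5 * p 0 * p 1 * p 2 ^ 10 - 8 * p 0 * p 1 * p 2 ^ 7 * p 3 - 4 * p 0 * p 1 * p 2 ^ 4 * p 3 ^ 2 - 4 * p 0 * p 2 ^ 11 - 2 * p 0 * p 2 ^ 8 * p 3 - p 0 * p 2 ^ 5 * p 3 ^ 2 - 4 * p 1 ^ 10 * p 2 ^ 2 - 2 * p 1 ^ 9 * p 2 ^ 3 - 6 * p 1 ^ 8 * p 2 ^ 4 - 10 * p 1 ^ 7 * p 2 ^ 5 - 3 * p 1 ^ 7 * p 2 ^ 2 * p 3 - 14 * p 1 ^ 6 * p 2 ^ 6 - 6 * p 1 ^ 6 * p 2 ^ 3 * p 3 - 14 * p 1 ^ 5 * p 2 ^ 7 - 4 * p 1 ^ 5 * p 2 ^ 4 * p 3 - 14 * p 1 ^ 4 * p 2 ^ 8 - 9 * p 1 ^ 4 * p 2 ^ 5 * p 3 - 14 * p 1 ^ 3 * p 2 ^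 9 - 10 * p 1 ^ 3 * p 2 ^ 6 * p 3 - 2 * p 1 ^ 3 * p 2 ^ 3 * p 3 ^ 2 - 10 * p 1 ^ 2 * p 2 ^ 10 - 11 * p 1 ^ 2 * p 2 ^ 7 * p 3 - 2 * p 1 ^ 2 * p 2 ^ 4 * p 3 ^ 2 - 6 * p 1 * p 2 ^ 11 - 10 * p 1 * p 2 ^ 8 * p 3 - 3 * p 1 * p 2 ^ 5 * p 3 ^ 2 - p 2 ^ 12 - 5 * p 2 ^ 9 * p 3 - 2 * p 2 ^ 6 * p 3 ^ 2) * h2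
  have hz0 : p 2 = 0 := pow_eq_zero_iff (by norm_num) |>.mp hz
  rw [hx0, hy0, hz0] at e0
  simp only [zero_pow, zero_mul, mul_zero, zero_add, add_zero, one_mul, mul_one] at e0
  have hw0 : p 3 = 0 := by
    have hw : p 3 ^ 2 = 0 := by linear_combination e0
    exact pow_eq_zero_iff (by norm_num) |>.mp hw
  apply hp
  funext i
  simp only [Pi.zero_apply]
  fin_cases i <;> assumption
end
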